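/- arXiv:2204.09870 — 12 statements merged into one kernel-verified Lean document; each statement's English description precedes it below -/
import Mathlib

section
/- Let G be a finite simple graph with m edges, adjacency matrix A(G), least adjacency eigenvalue λ_n(G), and edge bipartiteness ε_b(G). Then λ_n(G)² ≤ m − ε_b(G). -/
open Matrix Finset

/-- `σ` is a sign function on the edges of `G`: symmetric and `±1` on edges. -/
def IsSignFn {n : ℕ} (G : SimpleGraph (Fin n)) (σ : Fin n → Fin n → ℝ) : Prop :=
  (∀ i j, σ i j = σ j i) ∧ ∀ i j, G.Adj i j → σ i j = 1 ∨ σ i j = -1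

/-- The adjacency matrix of the signed graph `(G, σ)`. -/
def signedAdj {n : ℕ} (G : SimpleGraph (Fin n)) [DecidableRel G.Adj]
    (σ : Fin n → Fin n → ℝ) : Matrix (Fin n) (Fin n) ℝ :=
  fun i j => if G.Adj i j then σ i j else 0

/-- The sign of a walk: the product of the signs of its edges (with multiplicity). -/
def walkSign {V : Type*} {G : SimpleGraph V} (σ : V → V → ℝ) {u v : V} (w : G.Walk u v) : ℝ :=
  (w.darts.map fun d => σ d.toProd.1 d.toProd.2).prod

/-- A signed graph is balanced if every cycle has sign `+1`. -/
def IsBalanced {V : Type*} (G : SimpleGraph V) (σ : V → V → ℝ) : Prop :=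
  ∀ (u : V) (w : G.Walk u u), w.IsCycle → walkSign σ w = 1

/-- The set of cardinalities of edge sets whose deletion makes `(G, σ)` balanced.
The frustration index is the least element of this set. -/
def FrustrationSet {n : ℕ} (G : SimpleGraph (Fin n)) (σ : Fin n → Fin n → ℝ) : Set ℕ :=
  {k | ∃ F : Finset (Sym2 (Fin n)), ↑F ⊆ G.edgeSet ∧
    IsBalanced (G.deleteEdges ↑F) σ ∧ F.card = k}

/-- `S` induces a balanced complete subgraph of `(G, σ)`:
`S` is a clique and every cycle inside `S` has sign `+1`. -/
def IsBalancedClique {n : ℕ} (G : SimpleGraph (Fin n)) (σ : Fin n → Fin n → ℝ)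
    (S : Finset (Fin n)) : Prop :=
  G.IsClique (S : Set (Fin n)) ∧
    ∀ (u : Fin n) (w : G.Walk u u), w.IsCycle → (∀ v ∈ w.support, v ∈ S) → walkSign σ w = 1

/-- The set of cardinalities of balanced cliques of `(G, σ)`.
The balanced clique number is the greatest element of this set. -/
def BalancedCliqueSet {n : ℕ} (G : SimpleGraph (Fin n)) (σ : Fin n → Fin n → ℝ) : Set ℕ :=
  {k | ∃ S : Finset (Fin n), IsBalancedClique G σ S ∧ S.card = k}

/-- Switching equivalence of two sign functions on the same underlying graph. -/
def SwitchingEquiv {n : ℕ} (G : SimpleGraph (Fin n)) (σ₁ σ₂ : Fin n → Fin n → ℝ) : Prop :=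
  ∃ η : Fin n → ℝ, (∀ v, η v = 1 ∨ η v = -1) ∧ ∀ i j, G.Adj i j → σ₂ i j = η i * σ₁ i j * η j

/-- The set of cardinalities of edge sets whose deletion makes `G` bipartite.
The edge bipartiteness is the least element of this set. -/
def EdgeBipartitenessSet {n : ℕ} (G : SimpleGraph (Fin n)) : Set ℕ :=
  {k | ∃ F : Finset (Sym2 (Fin n)), ↑F ⊆ G.edgeSet ∧
    (G.deleteEdges ↑F).Colorable 2 ∧ F.card = k}

/-- Auxiliary graph: edges of `G` whose endpoints have opposite signs under `x`. -/
def crossGraph {n : ℕ} (G : SimpleGraph (Fin n)) (x : Fin n → ℝ) : SimpleGraph (Fin n) where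
  Adj i j := G.Adj i j ∧ ¬(0 ≤ x i ↔ 0 ≤ x j)
  symm := ⟨fun i j h => ⟨h.1.symm, fun hiff => h.2 hiff.symm⟩⟩
  loopless := ⟨fun i h => G.loopless.irrefl i h.1⟩

noncomputable instance {n : ℕ} (G : SimpleGraph (Fin n)) [DecidableRel G.Adj] (x : Fin n → ℝ) :
    DecidableRel (crossGraph G x).Adj := fun _ _ => instDecidableAnd

/-- `λ_n(G)² ≤ m - ε_b(G)`. -/
theorem stmt_3 {n : ℕ} (G : SimpleGraph (Fin n)) [DecidableRel G.Adj]
    (hA : (G.adjMatrix ℝ).IsHermitian)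
    (lamn : ℝ) (hlam : IsLeast (Set.range hA.eigenvalues) lamn)
    (εb : ℕ) (hεb : IsLeast (EdgeBipartitenessSet G) εb) :
    lamn ^ 2 ≤ (G.edgeFinset.card : ℝ) - εb := by
  classical
  obtain ⟨i0, hi0⟩ := hlam.1
  set x : Fin n → ℝ := ⇑(hA.eigenvectorBasis i0) with hxdef
  have hmul : G.adjMatrix ℝ *ᵥ x = lamn • x := by
    rw [← hi0]; exact hA.mulVec_eigenvectorBasis i0
  -- the eigenvector is a unit vector
  have hnorm : ∑ i, x i ^ 2 = 1 := by
    have h1 : ‖(hA.eigenvectorBasis i0 : EuclideanSpace ℝ (Fin n))‖ = 1 :=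
      hA.eigenvectorBasis.orthonormal.1 i0
    have h2 := EuclideanSpace.norm_eq (hA.eigenvectorBasis i0 : EuclideanSpace ℝ (Fin n))
    rw [h1] at h2
    have h3 : √(∑ i, ‖(hA.eigenvectorBasis i0 : EuclideanSpace ℝ (Fin n)) i‖ ^ 2) = 1 := h2.symm
    have h4 : (∑ i, ‖(hA.eigenvectorBasis i0 : EuclideanSpace ℝ (Fin n)) i‖ ^ 2) = 1 := by
      have := congrArg (· ^ 2) h3
      simpa [Real.sq_sqrt (Finset.sum_nonneg (fun i _ => sq_nonneg _))] using this
    simpa [Real.norm_eq_abs, sq_abs] using h4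
  -- the least eigenvalue is nonpositive
  have htr : ∑ i, hA.eigenvalues i = 0 := by
    have h := hA.spectral_theorem
    have heq : Matrix.trace (G.adjMatrix ℝ) = ∑ i, hA.eigenvalues i := by
      nth_rewrite 1 [h]
      rw [Unitary.conjStarAlgAut_apply, Matrix.trace_mul_cycle]
      have hu : (star ↑hA.eigenvectorUnitary : Matrix (Fin n) (Fin n) ℝ) *
          (↑hA.eigenvectorUnitary : Matrix (Fin n) (Fin n) ℝ) = 1 :=
        Unitary.coe_star_mul_self hA.eigenvectorUnitary
      rw [hu, Matrix.one_mul]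
      simp [Matrix.trace_diagonal]
    rw [← heq, SimpleGraph.trace_adjMatrix]
  have hlam0 : lamn ≤ 0 := by
    have hle : ∀ i, lamn ≤ hA.eigenvalues i := fun i => hlam.2 ⟨i, rfl⟩
    have hsum : (n : ℝ) * lamn ≤ 0 := by
      calc (n : ℝ) * lamn = ∑ _i : Fin n, lamn := by simp [mul_comm]
      _ ≤ ∑ i, hA.eigenvalues i := Finset.sum_le_sum fun i _ => hle i
      _ = 0 := htr
    have hn : (1 : ℝ) ≤ n := by exact_mod_cast i0.pos
    nlinarith
  -- express lamn as a sum over adjacent ordered pairs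
  set D : Finset (Fin n × Fin n) := univ.filter (fun p => G.Adj p.1 p.2) with hDdef
  set C : Finset (Fin n × Fin n) :=
    univ.filter (fun p => G.Adj p.1 p.2 ∧ ¬(0 ≤ x p.1 ↔ 0 ≤ x p.2)) with hCdef
  have heig : ∑ p ∈ D, x p.1 * x p.2 = lamn := by
    have h1 : ∑ i, x i * (G.adjMatrix ℝ *ᵥ x) i = lamn := by
      rw [hmul]
      have : ∑ i, x i * (lamn • x) i = lamn * ∑ i, x i ^ 2 := by
        rw [Finset.mul_sum]
        exact Finset.sum_congr rfl fun i _ => by simp [smul_eq_mul]; ring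
      rw [this, hnorm, mul_one]
    rw [← h1, hDdef, Finset.sum_filter, ← Finset.univ_product_univ, Finset.sum_product]
    refine Finset.sum_congr rfl fun i _ => ?_
    rw [Matrix.mulVec, dotProduct, Finset.mul_sum]
    refine Finset.sum_congr rfl fun j _ => ?_
    by_cases h : G.Adj i j <;> simp [h]
  have hCD : C ⊆ D := by
    intro p hp
    rw [hCdef, Finset.mem_filter] at hp
    rw [hDdef, Finset.mem_filter]
    exact ⟨hp.1, hp.2.1⟩
  -- the sum over same-sign pairs is nonnegative
  have hDC : ∀ p ∈ D \ C, 0 ≤ x p.1 * x p.2 := by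
    intro p hp
    rw [Finset.mem_sdiff, hDdef, hCdef, Finset.mem_filter, Finset.mem_filter] at hp
    have hadj := hp.1.2
    have hiff : 0 ≤ x p.1 ↔ 0 ≤ x p.2 := by
      by_contra hc
      exact hp.2 ⟨Finset.mem_univ _, hadj, hc⟩
    by_cases h1 : 0 ≤ x p.1
    · exact mul_nonneg h1 (hiff.1 h1)
    · have h2 : ¬ 0 ≤ x p.2 := fun h => h1 (hiff.2 h)
      exact le_of_lt (mul_pos_of_neg_of_neg (lt_of_not_ge h1) (lt_of_not_ge h2))
  set S : ℝ := ∑ p ∈ C, |x p.1| * |x p.2| with hSdef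
  have hS0 : 0 ≤ S := Finset.sum_nonneg fun p _ => mul_nonneg (abs_nonneg _) (abs_nonneg _)
  have hS1 : -lamn ≤ S := by
    have e1 : ∑ p ∈ D \ C, x p.1 * x p.2 + ∑ p ∈ C, x p.1 * x p.2 = lamn := by
      rw [Finset.sum_sdiff hCD]; exact heig
    have e2 : 0 ≤ ∑ p ∈ D \ C, x p.1 * x p.2 := Finset.sum_nonneg hDC
    have e3 : -S ≤ ∑ p ∈ C, x p.1 * x p.2 := by
      rw [hSdef, ← Finset.sum_neg_distrib]
      refine Finset.sum_le_sum fun p _ => ?_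
      rw [← abs_mul]
      exact neg_abs_le _
    linarith
  -- Cauchy–Schwarz
  have hCS : S ^ 2 ≤ (C.card : ℝ) * ∑ p ∈ C, (x p.1 * x p.2) ^ 2 := by
    have h := sq_sum_le_card_mul_sum_sq (s := C) (f := fun p => |x p.1| * |x p.2|)
    calc S ^ 2 ≤ (C.card : ℝ) * ∑ p ∈ C, (|x p.1| * |x p.2|) ^ 2 := h
    _ = (C.card : ℝ) * ∑ p ∈ C, (x p.1 * x p.2) ^ 2 := by
        congr 1
        exact Finset.sum_congr rfl fun p _ => by rw [← abs_mul, sq_abs]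
  -- the sum of squared products over cross pairs is at most 1/2
  have hhalf : ∑ p ∈ C, (x p.1 * x p.2) ^ 2 ≤ 1 / 2 := by
    set P : Finset (Fin n) := univ.filter (fun i => 0 ≤ x i) with hPdef
    set N : Finset (Fin n) := univ.filter (fun i => ¬ 0 ≤ x i) with hNdef
    have hsub : C ⊆ (P ×ˢ N) ∪ (N ×ˢ P) := by
      intro p hp
      rw [hCdef, Finset.mem_filter] at hp
      rw [Finset.mem_union, Finset.mem_product, Finset.mem_product, hPdef, hNdef]
      simp only [Finset.mem_filter, Finset.mem_univ, true_and]
      by_cases h1 : 0 ≤ x p.1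
      · exact Or.inl ⟨h1, fun h2 => hp.2.2 (iff_of_true h1 h2)⟩
      · exact Or.inr ⟨h1, by_contra fun h2 => hp.2.2 (iff_of_false h1 h2)⟩
    have hdisj : Disjoint (P ×ˢ N) (N ×ˢ P) := by
      rw [Finset.disjoint_left]
      intro p hp hq
      rw [Finset.mem_product] at hp hq
      rw [hPdef, Finset.mem_filter] at hp
      rw [hNdef, Finset.mem_filter] at hq
      exact hq.1.2 hp.1.2
    have h1 : ∑ p ∈ C, (x p.1 * x p.2) ^ 2 ≤
        ∑ p ∈ (P ×ˢ N) ∪ (N ×ˢ P), (x p.1 * x p.2) ^ 2 :=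
      Finset.sum_le_sum_of_subset_of_nonneg hsub fun p _ _ => sq_nonneg _
    have hPN : ∑ p ∈ P ×ˢ N, (x p.1 * x p.2) ^ 2 =
        (∑ i ∈ P, x i ^ 2) * (∑ j ∈ N, x j ^ 2) := by
      rw [Finset.sum_mul_sum, Finset.sum_product]
      exact Finset.sum_congr rfl fun i _ => Finset.sum_congr rfl fun j _ => by ring
    have hNP : ∑ p ∈ N ×ˢ P, (x p.1 * x p.2) ^ 2 =
        (∑ i ∈ N, x i ^ 2) * (∑ j ∈ P, x j ^ 2) := by
      rw [Finset.sum_mul_sum, Finset.sum_product]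
      exact Finset.sum_congr rfl fun i _ => Finset.sum_congr rfl fun j _ => by ring
    have hab : (∑ i ∈ P, x i ^ 2) + (∑ i ∈ N, x i ^ 2) = 1 := by
      rw [hPdef, hNdef, Finset.sum_filter_add_sum_filter_not]
      exact hnorm
    have ha : 0 ≤ ∑ i ∈ P, x i ^ 2 := Finset.sum_nonneg fun i _ => sq_nonneg _
    have hb : 0 ≤ ∑ i ∈ N, x i ^ 2 := Finset.sum_nonneg fun i _ => sq_nonneg _
    have h2 : ∑ p ∈ (P ×ˢ N) ∪ (N ×ˢ P), (x p.1 * x p.2) ^ 2 ≤ 1 / 2 := by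
      rw [Finset.sum_union hdisj, hPN, hNP]
      nlinarith [sq_nonneg ((∑ i ∈ P, x i ^ 2) - (∑ i ∈ N, x i ^ 2))]
    linarith
  -- combinatorics: relate C to the cross graph and edge bipartiteness
  set G' := crossGraph G x with hG'def
  have h2c : 2 * G'.edgeFinset.card = C.card := by
    rw [SimpleGraph.two_mul_card_edgeFinset]
    apply congrArg
    apply Finset.filter_congr
    intro p _
    rfl
  have hle' : G' ≤ G := fun _ _ h => h.1
  have hsubE : G'.edgeFinset ⊆ G.edgeFinset := SimpleGraph.edgeFinset_mono hle'
  set F : Finset (Sym2 (Fin n)) := G.edgeFinset \ G'.edgeFinset with hFdef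
  have hFsub : ↑F ⊆ G.edgeSet := by
    intro e he
    rw [Finset.mem_coe, hFdef, Finset.mem_sdiff] at he
    exact SimpleGraph.mem_edgeFinset.1 he.1
  have hcol : (G.deleteEdges ↑F).Colorable 2 := by
    refine ⟨SimpleGraph.Coloring.mk (fun v => if 0 ≤ x v then (0 : Fin 2) else 1) ?_⟩
    intro v w h
    rw [SimpleGraph.deleteEdges_adj] at h
    obtain ⟨hadj, hne⟩ := h
    have hmemG : s(v, w) ∈ G.edgeFinset := SimpleGraph.mem_edgeFinset.2 hadj
    have hmem' : s(v, w) ∈ G'.edgeFinset := by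
      by_contra hc
      exact hne (by rw [Finset.mem_coe, hFdef, Finset.mem_sdiff]; exact ⟨hmemG, hc⟩)
    have hcr : ¬(0 ≤ x v ↔ 0 ≤ x w) :=
      (G'.mem_edgeSet.mp (SimpleGraph.mem_edgeFinset.1 hmem')).2
    by_cases h1 : 0 ≤ x v <;> by_cases h2 : 0 ≤ x w <;>
      simp only [h1, h2, if_true, if_false] <;> first
      | exact absurd (iff_of_true h1 h2) hcr
      | exact absurd (iff_of_false h1 h2) hcr
      | decide
  have hεF : εb ≤ F.card := hεb.2 ⟨F, hFsub, hcol, rfl⟩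
  have hcard : F.card + G'.edgeFinset.card = G.edgeFinset.card :=
    Finset.card_sdiff_add_card_eq_card hsubE
  -- put everything together
  have hmain : lamn ^ 2 ≤ (G'.edgeFinset.card : ℝ) := by
    have hp : lamn ^ 2 ≤ S ^ 2 := by
      have := pow_le_pow_left₀ (neg_nonneg.2 hlam0) hS1 2
      simpa [neg_pow] using this
    have h2c' : (C.card : ℝ) = 2 * (G'.edgeFinset.card : ℝ) := by exact_mod_cast h2c.symm
    calc lamn ^ 2 ≤ S ^ 2 := hp
    _ ≤ (C.card : ℝ) * ∑ p ∈ C, (x p.1 * x p.2) ^ 2 := hCS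
    _ ≤ (C.card : ℝ) * (1 / 2) :=
        mul_le_mul_of_nonneg_left hhalf (Nat.cast_nonneg _)
    _ = (G'.edgeFinset.card : ℝ) := by rw [h2c']; ring
  have hfin : (G'.edgeFinset.card : ℝ) ≤ (G.edgeFinset.card : ℝ) - εb := by
    have h1 : (F.card : ℝ) + G'.edgeFinset.card = G.edgeFinset.card := by exact_mod_cast hcard
    have h2 : (εb : ℝ) ≤ F.card := by exact_mod_cast hεF
    linarith
  linarith
end

section
/- Let G be a finite simple graph on n = 2k vertices with adjacency matrix A(G) and least eigenvalue λ_n(G). Then |λ_n(G)| ≤ k. -/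
open Matrix Finset

lemma adj_eig_lower_bound {n : ℕ} (G : SimpleGraph (Fin n)) [DecidableRel G.Adj]
    (μ : ℝ) (v : Fin n → ℝ) (hv : v ≠ 0)
    (h : G.adjMatrix ℝ *ᵥ v = μ • v) : -(n : ℝ)/2 ≤ μ := by
  classical
  set p : Fin n → ℝ := fun i => max (v i) 0 with hp
  set q : Fin n → ℝ := fun i => max (-(v i)) 0 with hq
  have hp0 : ∀ i, 0 ≤ p i := fun i => le_max_right _ _
  have hq0 : ∀ i, 0 ≤ q i := fun i => le_max_right _ _
  have hvpq : ∀ i, v i = p i - q i := by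
    intro i
    simp only [hp, hq]
    rcases le_total (v i) 0 with h' | h'
    · rw [max_eq_right h', max_eq_left (by linarith)]; ring
    · rw [max_eq_left h', max_eq_right (by linarith)]; ring
  have hpq0 : ∀ i, p i * q i = 0 := by
    intro i
    rcases le_total (v i) 0 with h' | h'
    · have : p i = 0 := max_eq_right h'
      simp [this]
    · have : q i = 0 := max_eq_right (by linarith)
      simp [this]
  set N : ℝ := ∑ i, v i ^ 2 with hN
  obtain ⟨i₀, hi₀⟩ : ∃ i, v i ≠ 0 := Function.ne_iff.mp hv
  have hNpos : 0 < N :=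
    Finset.sum_pos' (fun i _ => sq_nonneg _) ⟨i₀, mem_univ i₀, by positivity⟩
  have hquad : μ * N = ∑ i, ∑ j, G.adjMatrix ℝ i j * (v i * v j) := by
    have : ∀ i, (G.adjMatrix ℝ *ᵥ v) i = μ * v i := by
      intro i; rw [h]; simp
    calc μ * N = ∑ i, v i * (μ * v i) := by
          rw [hN, Finset.mul_sum]; congr 1; ext i; ring
      _ = ∑ i, v i * (G.adjMatrix ℝ *ᵥ v) i := by
          simp_rw [this]
      _ = ∑ i, ∑ j, G.adjMatrix ℝ i j * (v i * v j) := by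
          congr 1; ext i
          simp only [Matrix.mulVec, dotProduct, Finset.mul_sum]
          congr 1; ext j; ring
  have hptwise : ∀ i j, -(p i * q j + q i * p j) ≤ G.adjMatrix ℝ i j * (v i * v j) := by
    intro i j
    by_cases hij : G.Adj i j
    · rw [SimpleGraph.adjMatrix_apply, if_pos hij, one_mul, hvpq i, hvpq j]
      nlinarith [mul_nonneg (hp0 i) (hp0 j), mul_nonneg (hq0 i) (hq0 j)]
    · rw [SimpleGraph.adjMatrix_apply, if_neg hij, zero_mul]
      have := mul_nonneg (hp0 i) (hq0 j)
      have := mul_nonneg (hq0 i) (hp0 j)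
      linarith
  set a : ℝ := ∑ i, p i with ha
  set b : ℝ := ∑ i, q i with hb
  have hlow : -(2 * (a * b)) ≤ μ * N := by
    rw [hquad]
    calc -(2 * (a * b)) = ∑ i, ∑ j, -(p i * q j + q i * p j) := by
          simp only [Finset.sum_neg_distrib, Finset.sum_add_distrib, ← Finset.mul_sum,
            ← Finset.sum_mul]
          rw [ha, hb]; ring
      _ ≤ _ := Finset.sum_le_sum fun i _ => Finset.sum_le_sum fun j _ => hptwise i j
  set P : ℝ := ∑ i, p i ^ 2 with hP
  set Q : ℝ := ∑ i, q i ^ 2 with hQ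
  have hPQN : P + Q = N := by
    rw [hP, hQ, hN, ← Finset.sum_add_distrib]
    congr 1; ext i
    have := hpq0 i
    rw [hvpq i]; ring_nf; nlinarith [hpq0 i]
  set S : Finset (Fin n) := univ.filter (fun i => 0 < v i) with hS
  set T : Finset (Fin n) := univ.filter (fun i => v i < 0) with hT
  have haS : a = ∑ i ∈ S, p i := by
    rw [ha, hS]
    refine (Finset.sum_filter_of_ne ?_).symm
    intro i _ hpi
    by_contra h'
    exact hpi (max_eq_right (not_lt.mp h'))
  have hbT : b = ∑ i ∈ T, q i := by
    rw [hb, hT]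
    refine (Finset.sum_filter_of_ne ?_).symm
    intro i _ hqi
    by_contra h'
    exact hqi (max_eq_right (by linarith [not_lt.mp h']))
  have hcard : (S.card : ℝ) + T.card ≤ n := by
    have hdisj : Disjoint S T := by
      rw [Finset.disjoint_filter]
      intro i _ h1 h2; exact absurd h1 (asymm h2)
    have := Finset.card_union_of_disjoint hdisj
    have hle : (S ∪ T).card ≤ n := by
      simpa using Finset.card_le_card (Finset.subset_univ (S ∪ T))
    exact_mod_cast this ▸ hle
  have ha2 : a ^ 2 ≤ S.card * P := by
    rw [haS]
    calc (∑ i ∈ S, p i) ^ 2 ≤ S.card * ∑ i ∈ S, p i ^ 2 := by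
          exact sq_sum_le_card_mul_sum_sq (s := S) (f := p)
      _ ≤ S.card * P := by
          apply mul_le_mul_of_nonneg_left _ (Nat.cast_nonneg _)
          exact Finset.sum_le_sum_of_subset_of_nonneg (Finset.subset_univ S)
            (fun i _ _ => sq_nonneg _)
  have hb2 : b ^ 2 ≤ T.card * Q := by
    rw [hbT]
    calc (∑ i ∈ T, q i) ^ 2 ≤ T.card * ∑ i ∈ T, q i ^ 2 := by
          exact sq_sum_le_card_mul_sum_sq (s := T) (f := q)
      _ ≤ T.card * Q := by
          apply mul_le_mul_of_nonneg_left _ (Nat.cast_nonneg _)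
          exact Finset.sum_le_sum_of_subset_of_nonneg (Finset.subset_univ T)
            (fun i _ _ => sq_nonneg _)
  have ha0 : 0 ≤ a := Finset.sum_nonneg fun i _ => hp0 i
  have hb0 : 0 ≤ b := Finset.sum_nonneg fun i _ => hq0 i
  have hP0 : 0 ≤ P := Finset.sum_nonneg fun i _ => sq_nonneg _
  have hQ0 : 0 ≤ Q := Finset.sum_nonneg fun i _ => sq_nonneg _
  have hs0 : (0:ℝ) ≤ S.card := Nat.cast_nonneg _
  have ht0 : (0:ℝ) ≤ T.card := Nat.cast_nonneg _
  clear_value N a b P Q S T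
  clear hquad hptwise haS hbT hvpq hpq0 hp0 hq0 h hv hN ha hb hP hQ hS hT hp hq hi₀
  have h2 : (S.card : ℝ) * T.card * 4 ≤ (n : ℝ) ^ 2 := by
    nlinarith [sq_nonneg ((S.card : ℝ) - T.card), hcard, hs0, ht0]
  have h3 : P * Q * 4 ≤ N ^ 2 := by nlinarith [sq_nonneg (P - Q)]
  have hsq : (2 * (a * b)) ^ 2 ≤ ((n : ℝ) * N / 2) ^ 2 := by
    have h1 : a ^ 2 * b ^ 2 ≤ (S.card * P) * (T.card * Q) :=
      mul_le_mul ha2 hb2 (sq_nonneg _) (by positivity)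
    calc (2 * (a * b)) ^ 2 = 4 * (a ^ 2 * b ^ 2) := by ring
      _ ≤ 4 * ((S.card * P) * (T.card * Q)) := by linarith
      _ = ((S.card : ℝ) * T.card * 4) * (P * Q) := by ring
      _ ≤ (n : ℝ) ^ 2 * (P * Q) := mul_le_mul_of_nonneg_right h2 (mul_nonneg hP0 hQ0)
      _ ≤ (n : ℝ) ^ 2 * (N ^ 2 / 4) := by
          apply mul_le_mul_of_nonneg_left (by linarith) (sq_nonneg _)
      _ = ((n : ℝ) * N / 2) ^ 2 := by ring
  have hnN : (0:ℝ) ≤ (n : ℝ) * N / 2 := by positivity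
  have hab : 2 * (a * b) ≤ (n : ℝ) * N / 2 := by
    by_contra h'
    push_neg at h'
    have := pow_lt_pow_left₀ h' hnN (n := 2) (by norm_num)
    linarith
  have hmul : -((n : ℝ) / 2) * N ≤ μ * N := by linarith
  have := (mul_le_mul_iff_of_pos_right hNpos).mp hmul
  linarith

/-- For a graph on `n = 2k` vertices, `|λ_n(G)| ≤ k`. -/
theorem stmt_4 (k : ℕ) (G : SimpleGraph (Fin (2 * k))) [DecidableRel G.Adj]
    (hA : (G.adjMatrix ℝ).IsHermitian)
    (lamn : ℝ) (hlam : IsLeast (Set.range hA.eigenvalues) lamn) :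
    |lamn| ≤ (k : ℝ) := by
  obtain ⟨⟨i, hi⟩, hlb⟩ := hlam
  -- lower bound
  have hev := hA.mulVec_eigenvectorBasis i
  have hvne : (⇑(hA.eigenvectorBasis i) : Fin (2*k) → ℝ) ≠ 0 := by
    have hne := hA.eigenvectorBasis.orthonormal.ne_zero i
    intro hc
    apply hne
    ext j
    exact congrFun hc j
  have hlow := adj_eig_lower_bound G (hA.eigenvalues i) _ hvne hev
  rw [hi] at hlow
  -- upper bound : lamn ≤ 0 via trace
  have htr : ∑ j, hA.eigenvalues j = 0 := by
    have h2 : (G.adjMatrix ℝ).trace = ∑ j, hA.eigenvalues j := by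
      conv_lhs => rw [hA.spectral_theorem]
      rw [Unitary.conjStarAlgAut_apply, Matrix.trace_mul_comm, ← mul_assoc, Unitary.coe_star_mul_self, one_mul]
      simp [Matrix.trace_diagonal]
    rw [← h2, SimpleGraph.trace_adjMatrix]
  have hle : ∀ j, lamn ≤ hA.eigenvalues j := fun j => hlb ⟨j, rfl⟩
  have hsum : (2 * k : ℝ) * lamn ≤ 0 := by
    have : ∑ _j : Fin (2*k), lamn ≤ ∑ j, hA.eigenvalues j :=
      Finset.sum_le_sum fun j _ => hle j
    rw [htr] at this
    simpa [Finset.sum_const, nsmul_eq_mul, mul_comm] using this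
  have hkpos : 0 < 2 * k := i.pos
  have hkr : (0:ℝ) < 2 * k := by exact_mod_cast hkpos
  have hup : lamn ≤ 0 := by nlinarith
  rw [abs_le]
  constructor
  · have : -(((2*k : ℕ)) : ℝ)/2 ≤ lamn := hlow
    push_cast at this
    linarith
  · have : (0:ℝ) ≤ k := Nat.cast_nonneg k
    linarith
end

section
/- Let G be a finite simple graph on n = 2k+1 vertices with adjacency matrix A(G) and least eigenvalue λ_n(G). Then |λ_n(G)| ≤ √(k(k+1)). -/
open Matrix Finset

theorem sum_eig {m : ℕ} (A : Matrix (Fin m) (Fin m) ℝ) (hA : A.IsHermitian) :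
    ∑ j, hA.eigenvalues j = A.trace := by
  rw [hA.trace_eq_sum_eigenvalues]
  simp


set_option maxHeartbeats 1000000 in
/-- For a graph on `n = 2k+1` vertices, `|λ_n(G)| ≤ √(k(k+1))`. -/
theorem stmt_5 (k : ℕ) (G : SimpleGraph (Fin (2 * k + 1))) [DecidableRel G.Adj]
    (hA : (G.adjMatrix ℝ).IsHermitian)
    (lamn : ℝ) (hlam : IsLeast (Set.range hA.eigenvalues) lamn) :
    |lamn| ≤ Real.sqrt ((k : ℝ) * (k + 1)) := by
    classical
  have hn : (2 * k + 1 : ℕ) = 2 * k + 1 := rfl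
  obtain ⟨⟨i, hi⟩, hlb⟩ := hlam
  -- lamn ≤ 0
  have hsum : ∑ j, hA.eigenvalues j = 0 := by
    rw [sum_eig]; simp [Matrix.trace, Matrix.diag]
  have hlam0 : lamn ≤ 0 := by
    by_contra h
    push_neg at h
    have : (0:ℝ) < ∑ j, hA.eigenvalues j :=
      Finset.sum_pos (fun j _ => lt_of_lt_of_le h (hlb ⟨j, rfl⟩)) ⟨i, Finset.mem_univ i⟩
    linarith [hsum]
  -- eigenvector
  set v : Fin (2*k+1) → ℝ := (WithLp.equiv 2 _) (hA.eigenvectorBasis i) with hv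
  have hmul : G.adjMatrix ℝ *ᵥ v = lamn • v := by rw [← hi]; exact hA.mulVec_eigenvectorBasis i
  have hnorm : ∑ x, v x ^ 2 = 1 := by
    have h1 : ‖hA.eigenvectorBasis i‖ = 1 := hA.eigenvectorBasis.orthonormal.1 i
    rw [EuclideanSpace.norm_eq] at h1
    have := Real.sqrt_eq_one.mp h1
    simpa [hv, Real.norm_eq_abs, sq_abs] using this
  -- quadratic form
  have hquad : ∑ x, ∑ y, G.adjMatrix ℝ x y * v x * v y = lamn := by
    have : ∑ x, v x * ((G.adjMatrix ℝ) *ᵥ v) x = lamn := by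
      rw [hmul]
      simp only [Pi.smul_apply, smul_eq_mul]
      rw [show ∑ x, v x * (lamn * v x) = lamn * ∑ x, v x ^ 2 by
        rw [Finset.mul_sum]; congr 1; ext x; ring, hnorm, mul_one]
    rw [← this]
    congr 1; ext x
    rw [Matrix.mulVec, dotProduct, Finset.mul_sum]
    congr 1; ext y; ring
  -- positive/negative parts
  set p : Fin (2*k+1) → ℝ := fun x => max (v x) 0 with hp
  set q : Fin (2*k+1) → ℝ := fun x => max (-v x) 0 with hq
  have hp0 : ∀ x, 0 ≤ p x := fun x => le_max_right _ _
  have hq0 : ∀ x, 0 ≤ q x := fun x => le_max_right _ _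
  have hpq : ∀ x, v x = p x - q x := by
    intro x
    rcases le_total 0 (v x) with h | h
    · simp [hp, hq, max_eq_left h, max_eq_right (neg_nonpos.mpr h)]
    · simp [hp, hq, max_eq_right h, max_eq_left (neg_nonneg.mpr h)]
  -- pointwise bound
  have hbound : -lamn ≤ ∑ x, ∑ y, (p x * q y + q x * p y) := by
    rw [← hquad, ← Finset.sum_neg_distrib]
    apply Finset.sum_le_sum
    intro x _
    rw [← Finset.sum_neg_distrib]
    apply Finset.sum_le_sum
    intro y _
    have hA0 : (0:ℝ) ≤ G.adjMatrix ℝ x y := by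
      simp [SimpleGraph.adjMatrix_apply]; split_ifs <;> norm_num
    have hA1 : G.adjMatrix ℝ x y ≤ 1 := by
      simp [SimpleGraph.adjMatrix_apply]; split_ifs <;> norm_num
    rw [hpq x, hpq y]
    nlinarith [mul_nonneg (hp0 x) (hp0 y), mul_nonneg (hq0 x) (hq0 y),
      mul_nonneg (hp0 x) (hq0 y), mul_nonneg (hq0 x) (hp0 y),
      mul_nonneg (sub_nonneg.mpr hA1) (mul_nonneg (hp0 x) (hq0 y)),
      mul_nonneg (sub_nonneg.mpr hA1) (mul_nonneg (hq0 x) (hp0 y)),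
      mul_nonneg hA0 (mul_nonneg (hp0 x) (hp0 y)),
      mul_nonneg hA0 (mul_nonneg (hq0 x) (hq0 y))]
  have hsum2 : ∑ x, ∑ y, (p x * q y + q x * p y) = 2 * (∑ x, p x) * (∑ x, q x) := by
    simp only [Finset.sum_add_distrib, ← Finset.sum_mul, ← Finset.mul_sum]
    ring
  rw [hsum2] at hbound
  -- split by sign
  set S : Finset (Fin (2*k+1)) := Finset.univ.filter (fun x => 0 < v x) with hS
  set T : Finset (Fin (2*k+1)) := Finset.univ.filter (fun x => ¬ 0 < v x) with hT
  have hcard : S.card + T.card = 2 * k + 1 := by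
    rw [hS, hT, Finset.card_filter_add_card_filter_not]
    simp
  have hPsum : ∑ x, p x = ∑ x ∈ S, v x := by
    rw [← Finset.sum_filter_add_sum_filter_not Finset.univ (fun x => 0 < v x) p, ← hS, ← hT]
    have h1 : ∑ x ∈ T, p x = 0 := by
      apply Finset.sum_eq_zero
      intro x hx
      rw [hT, Finset.mem_filter] at hx
      simp [hp, max_eq_right (not_lt.mp hx.2)]
    have h2 : ∑ x ∈ S, p x = ∑ x ∈ S, v x := by
      apply Finset.sum_congr rfl
      intro x hx
      rw [hS, Finset.mem_filter] at hx
      simp [hp, max_eq_left (le_of_lt hx.2)]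
    rw [h1, h2, add_zero]
  have hQsum : ∑ x, q x = ∑ x ∈ T, (-v x) := by
    rw [← Finset.sum_filter_add_sum_filter_not Finset.univ (fun x => 0 < v x) q, ← hS, ← hT]
    have h1 : ∑ x ∈ S, q x = 0 := by
      apply Finset.sum_eq_zero
      intro x hx
      rw [hS, Finset.mem_filter] at hx
      simp [hq, max_eq_right (neg_nonpos.mpr (le_of_lt hx.2))]
    have h2 : ∑ x ∈ T, q x = ∑ x ∈ T, (-v x) := by
      apply Finset.sum_congr rfl
      intro x hx
      rw [hT, Finset.mem_filter] at hx
      simp [hq, max_eq_left (neg_nonneg.mpr (not_lt.mp hx.2))]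
    rw [h1, h2, zero_add]
  -- Cauchy-Schwarz
  set a : ℝ := ∑ x ∈ S, v x ^ 2 with ha
  set b : ℝ := ∑ x ∈ T, v x ^ 2 with hb
  have hab : a + b = 1 := by
    rw [ha, hb, hS, hT, Finset.sum_filter_add_sum_filter_not, hnorm]
  have ha0 : 0 ≤ a := Finset.sum_nonneg fun x _ => sq_nonneg _
  have hb0 : 0 ≤ b := Finset.sum_nonneg fun x _ => sq_nonneg _
  have hCS1 : (∑ x ∈ S, v x) ^ 2 ≤ S.card * a :=
    sq_sum_le_card_mul_sum_sq
  have hCS2 : (∑ x ∈ T, (-v x)) ^ 2 ≤ T.card * b := by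
    have := sq_sum_le_card_mul_sum_sq (s := T) (f := fun x => -v x)
    simpa using this
  have hP0 : 0 ≤ ∑ x, p x := Finset.sum_nonneg fun x _ => hp0 x
  have hQ0 : 0 ≤ ∑ x, q x := Finset.sum_nonneg fun x _ => hq0 x
  -- squared bound
  have hsq : lamn ^ 2 ≤ (S.card : ℝ) * T.card := by
    have h1 : lamn ^ 2 ≤ (2 * (∑ x, p x) * (∑ x, q x)) ^ 2 := by
      have : -lamn = |lamn| := (abs_of_nonpos hlam0).symm
      nlinarith [abs_nonneg lamn, sq_abs lamn]
    have h2 : (2 * (∑ x, p x) * (∑ x, q x)) ^ 2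
        = 4 * ((∑ x ∈ S, v x) ^ 2) * ((∑ x ∈ T, (-v x)) ^ 2) := by
      rw [hPsum, hQsum]; ring
    have h3 : 4 * ((∑ x ∈ S, v x) ^ 2) * ((∑ x ∈ T, (-v x)) ^ 2)
        ≤ 4 * (S.card * a) * (T.card * b) := by
      apply mul_le_mul
      · apply mul_le_mul_of_nonneg_left hCS1 (by norm_num)
      · exact hCS2
      · positivity
      · exact mul_nonneg (by norm_num) (mul_nonneg (Nat.cast_nonneg _) ha0)
    have h4 : 4 * ((S.card:ℝ) * a) * (T.card * b) ≤ (S.card : ℝ) * T.card := by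
      have h5 : 4 * a * b ≤ 1 := by nlinarith [sq_nonneg (a - b)]
      have := mul_le_mul_of_nonneg_left h5
        (mul_nonneg (Nat.cast_nonneg S.card) (Nat.cast_nonneg T.card) : (0:ℝ) ≤ S.card * T.card)
      nlinarith
    linarith
  -- arithmetic: S.card * T.card ≤ k * (k + 1)
  have harith : (S.card : ℝ) * T.card ≤ k * (k + 1) := by
    have : S.card * T.card ≤ k * (k + 1) := by
      rcases le_or_gt S.card k with h | h
      · nlinarith [hcard]
      · nlinarith [hcard]
    exact_mod_cast this
  -- conclude
  have : lamn ^ 2 ≤ (k : ℝ) * (k + 1) := le_trans hsq harith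
  calc |lamn| = Real.sqrt (lamn ^ 2) := (Real.sqrt_sq_eq_abs lamn).symm
    _ ≤ Real.sqrt ((k : ℝ) * (k + 1)) := Real.sqrt_le_sqrt this
end

section
/- (Turán's inequality for signed graphs) Let Σ = (G, σ) be a signed graph with n vertices, m edges, balanced clique number ω_b(Σ) and frustration index ε(Σ). Then m ≤ ε(Σ) + (n²/2)·(1 − 1/ω_b(Σ)). -/
open Matrix Finset

lemma walkSign_transfer' {V : Type*} {G H : SimpleGraph V} (σ : V → V → ℝ) {u v : V}
    (w : G.Walk u v) (h : ∀ e ∈ w.edges, e ∈ H.edgeSet) :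
    walkSign σ (w.transfer H h) = walkSign σ w := by
  induction w with
  | nil => rfl
  | cons ha p ih =>
    simp only [SimpleGraph.Walk.transfer, walkSign, SimpleGraph.Walk.darts_cons, List.map_cons,
      List.prod_cons] at *
    exact congrArg (fun x => σ _ _ * x) (ih _)

open SimpleGraph in
lemma turan_edge_bound' (n r : ℕ) (hr : 0 < r) :
    ((turanGraph n r).edgeFinset.card : ℝ) ≤ (n : ℝ) ^ 2 / 2 * (1 - 1 / r) := by
  classical
  set c : ℕ → ℕ := fun i => #(univ.filter fun v : Fin n => (v : ℕ) % r = i) with hc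
  have hsum : ∑ i ∈ Finset.range r, c i = n := by
    rw [← Finset.card_fin n]
    exact (Finset.card_eq_sum_card_fiberwise (f := fun v : Fin n => (v : ℕ) % r)
      (fun v _ => Finset.mem_range.2 (Nat.mod_lt _ hr))).symm
  have hpairs : #(univ.filter fun p : Fin n × Fin n => (p.1 : ℕ) % r = (p.2 : ℕ) % r)
      = ∑ i ∈ Finset.range r, c i ^ 2 := by
    rw [Finset.card_eq_sum_card_fiberwise (f := fun p : Fin n × Fin n => (p.1 : ℕ) % r)
      (t := Finset.range r) (fun p _ => Finset.mem_range.2 (Nat.mod_lt _ hr))]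
    refine Finset.sum_congr rfl fun i _ => ?_
    rw [Finset.filter_filter]
    have he : (univ.filter fun p : Fin n × Fin n =>
        ((p.1 : ℕ) % r = (p.2 : ℕ) % r) ∧ (p.1 : ℕ) % r = i)
        = (univ.filter fun v : Fin n => (v : ℕ) % r = i) ×ˢ
          (univ.filter fun v : Fin n => (v : ℕ) % r = i) := by
      ext ⟨a, b⟩
      simp only [Finset.mem_filter, Finset.mem_univ, true_and, Finset.mem_product]
      omega
    rw [he, Finset.card_product, sq]
  have h2m : 2 * #(turanGraph n r).edgeFinset
      = #(univ.filter fun p : Fin n × Fin n => ¬((p.1 : ℕ) % r = (p.2 : ℕ) % r)) := by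
    rw [SimpleGraph.two_mul_card_edgeFinset]
    congr 1
  have htwo : 2 * #(turanGraph n r).edgeFinset + ∑ i ∈ Finset.range r, c i ^ 2 = n ^ 2 := by
    rw [h2m, ← hpairs, add_comm, Finset.card_filter_add_card_filter_not]
    simp [sq]
  have hca : (∑ i ∈ Finset.range r, (c i : ℝ)) = n := by exact_mod_cast congrArg Nat.cast hsum
  have hcs : (n : ℝ) ^ 2 ≤ (r : ℝ) * ∑ i ∈ Finset.range r, (c i : ℝ) ^ 2 := by
    have h := sq_sum_le_card_mul_sum_sq (s := Finset.range r) (f := fun i => (c i : ℝ))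
    rwa [hca, Finset.card_range] at h
  have h2mr : 2 * (#(turanGraph n r).edgeFinset : ℝ) + ∑ i ∈ Finset.range r, (c i : ℝ) ^ 2
      = (n : ℝ) ^ 2 := by exact_mod_cast htwo
  have hr' : (0 : ℝ) < r := by exact_mod_cast hr
  have hS : (n : ℝ) ^ 2 / r ≤ ∑ i ∈ Finset.range r, (c i : ℝ) ^ 2 := by
    rw [div_le_iff₀ hr']; linarith [hcs]
  have key : (#(turanGraph n r).edgeFinset : ℝ) ≤ ((n : ℝ) ^ 2 - (n : ℝ) ^ 2 / r) / 2 := by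
    linarith
  calc (#(turanGraph n r).edgeFinset : ℝ) ≤ ((n : ℝ) ^ 2 - (n : ℝ) ^ 2 / r) / 2 := key
    _ = (n : ℝ) ^ 2 / 2 * (1 - 1 / r) := by ring

open SimpleGraph in
lemma cliquefree_bound' {n r : ℕ} (hr : 0 < r) (H : SimpleGraph (Fin n)) [DecidableRel H.Adj]
    (hH : H.CliqueFree (r + 1)) :
    ((H.edgeFinset.card : ℝ)) ≤ (n : ℝ) ^ 2 / 2 * (1 - 1 / r) := by
  obtain ⟨T, dT, hT⟩ := SimpleGraph.exists_isTuranMaximal (V := Fin n) hr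
  have h1 : #H.edgeFinset ≤ #T.edgeFinset := hT.2 hH
  obtain ⟨f⟩ := hT.nonempty_iso_turanGraph
  have h2 : #T.edgeFinset = #(turanGraph (Fintype.card (Fin n)) r).edgeFinset :=
    f.card_edgeFinset_eq
  have hb := turan_edge_bound' (Fintype.card (Fin n)) r hr
  rw [Fintype.card_fin] at hb h2
  calc ((#H.edgeFinset : ℝ)) ≤ (#T.edgeFinset : ℝ) := by exact_mod_cast h1
    _ = (#(turanGraph n r).edgeFinset : ℝ) := by exact_mod_cast h2
    _ ≤ _ := hb


/-- Turán's inequality for signed graphs: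
`m ≤ ε(Σ) + (n²/2)(1 - 1/ω_b(Σ))`. -/
theorem stmt_6 {n : ℕ} (G : SimpleGraph (Fin n)) [DecidableRel G.Adj]
    (σ : Fin n → Fin n → ℝ) (hσ : IsSignFn G σ)
    (ωb : ℕ) (hω : IsGreatest (BalancedCliqueSet G σ) ωb)
    (ε : ℕ) (hε : IsLeast (FrustrationSet G σ) ε) :
    (G.edgeFinset.card : ℝ) ≤ ε + (n : ℝ) ^ 2 / 2 * (1 - 1 / ωb) := by
  classical
  obtain ⟨F, hFsub, hFbal, hFcard⟩ := hε.1
  rcases Nat.eq_zero_or_pos n with hn | hn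
  · subst hn
    have h0 : G.edgeFinset = ∅ := Finset.eq_empty_of_isEmpty _
    rw [h0]
    have h1 : (0 : ℝ) ≤ (ε : ℝ) := Nat.cast_nonneg _
    simp
  · -- n ≥ 1 : ωb ≥ 1
    have hω1 : 0 < ωb := by
      have h1 : 1 ∈ BalancedCliqueSet G σ := by
        refine ⟨{⟨0, hn⟩}, ⟨?_, ?_⟩, Finset.card_singleton _⟩
        · intro a ha b hb hab
          simp only [Finset.coe_singleton, Set.mem_singleton_iff] at ha hb
          exact absurd (ha.trans hb.symm) hab
        · intro u w hc hsupp
          exfalso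
          cases w with
          | nil => exact hc.ne_nil rfl
          | cons ha p =>
            have h1 := hsupp u (SimpleGraph.Walk.start_mem_support _)
            have h2 := hsupp _ (by
              rw [SimpleGraph.Walk.support_cons]
              exact List.mem_cons_of_mem _ p.start_mem_support)
            simp only [Finset.mem_singleton] at h1 h2
            exact ha.ne (h1.trans h2.symm)
      exact lt_of_lt_of_le one_pos (hω.2 h1)
    set G' := G.deleteEdges (↑F : Set (Sym2 (Fin n))) with hG'
    have hcf : G'.CliqueFree (ωb + 1) := by
      intro S hS
      have hclique : G.IsClique (S : Set (Fin n)) := fun a ha b hb hab =>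
        (SimpleGraph.deleteEdges_le _ (hS.1 ha hb hab))
      have hbc : IsBalancedClique G σ S := by
        refine ⟨hclique, fun u w hc hsupp => ?_⟩
        have hedges : ∀ e ∈ w.edges, e ∈ G'.edgeSet := by
          intro e he
          induction e with
          | h a b =>
            have ha : a ∈ S := hsupp a (w.fst_mem_support_of_mem_edges he)
            have hb : b ∈ S := hsupp b (w.snd_mem_support_of_mem_edges he)
            have hadj : G.Adj a b := (SimpleGraph.mem_edgeSet G).1 (w.edges_subset_edgeSet he)
            exact (SimpleGraph.mem_edgeSet G').2 (hS.1 ha hb hadj.ne)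
        have hb := hFbal u (w.transfer G' hedges) (hc.transfer hedges)
        rwa [walkSign_transfer'] at hb
      exact absurd (hω.2 ⟨S, hbc, hS.2⟩) (by omega)
    have hεm : #G.edgeFinset ≤ ε + #G'.edgeFinset := by
      have hsub : G.edgeFinset ⊆ F ∪ G'.edgeFinset := by
        intro e he
        rw [Finset.mem_union]
        by_cases hf : e ∈ F
        · exact Or.inl hf
        · right
          rw [SimpleGraph.mem_edgeFinset, hG', SimpleGraph.edgeSet_deleteEdges]
          exact ⟨SimpleGraph.mem_edgeFinset.1 he, hf⟩
      calc #G.edgeFinset ≤ #(F ∪ G'.edgeFinset) := Finset.card_le_card hsub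
        _ ≤ #F + #G'.edgeFinset := Finset.card_union_le _ _
        _ = ε + #G'.edgeFinset := by rw [hFcard]
    have hbound := cliquefree_bound' hω1 G' hcf
    have hcast : (#G.edgeFinset : ℝ) ≤ (ε : ℝ) + (#G'.edgeFinset : ℝ) := by exact_mod_cast hεm
    linarith
end

section
/- Let Σ = (G, σ) be a signed graph with m edges, balanced clique number ω_b(Σ) and frustration index ε(Σ). Then ω_b(Σ)(ω_b(Σ) − 1)/2 ≤ m − ε(Σ); consequently ω_b(Σ) ≤ ⌊1/2 + √(2(m − ε(Σ)) + 1/4)⌋. -/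
open Matrix Finset

section Aux

variable {V : Type*}

lemma walkSign_mapLe {G G' : SimpleGraph V} (h : G ≤ G') (σ : V → V → ℝ) {u v : V}
    (w : G.Walk u v) : walkSign σ (w.mapLe h) = walkSign σ w := by
  simp [walkSign, SimpleGraph.Walk.darts_map, List.map_map, Function.comp_def,
    SimpleGraph.Hom.mapDart]

lemma support_mapLe {G G' : SimpleGraph V} (h : G ≤ G') {u v : V}
    (w : G.Walk u v) : (w.mapLe h).support = w.support := by
  rw [SimpleGraph.Walk.support_map]
  exact List.map_id _

lemma support_subset_of_adj_subset {G : SimpleGraph V} {S : Set V}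
    (hS : ∀ ⦃a b : V⦄, G.Adj a b → a ∈ S) {u v : V} (w : G.Walk u v) (hv : v ∈ S) :
    ∀ x ∈ w.support, x ∈ S := by
  induction w with
  | nil => simpa using hv
  | cons h p ih =>
    intro x hx
    rw [SimpleGraph.Walk.support_cons, List.mem_cons] at hx
    rcases hx with rfl | hx
    · exact hS h
    · exact ih hv x hx

end Aux

/-- `ω_b(Σ)(ω_b(Σ)-1)/2 ≤ m - ε(Σ)`, hence
`ω_b(Σ) ≤ ⌊1/2 + √(2(m - ε(Σ)) + 1/4)⌋`. -/

theorem stmt_7 {n : ℕ} (G : SimpleGraph (Fin n)) [DecidableRel G.Adj]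
    (σ : Fin n → Fin n → ℝ) (hσ : IsSignFn G σ)
    (ωb : ℕ) (hω : IsGreatest (BalancedCliqueSet G σ) ωb)
    (ε : ℕ) (hε : IsLeast (FrustrationSet G σ) ε) :
    (ωb : ℝ) * ((ωb : ℝ) - 1) / 2 ≤ (G.edgeFinset.card : ℝ) - ε ∧
    (ωb : ℤ) ≤ ⌊(1 / 2 : ℝ) + Real.sqrt (2 * ((G.edgeFinset.card : ℝ) - ε) + 1 / 4)⌋ := by
  classical
  obtain ⟨S, hS, hScard⟩ := hω.1
  -- the set of edges outside the clique
  set F : Finset (Sym2 (Fin n)) :=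
    G.edgeFinset.filter (fun e => ¬ ∀ v ∈ e, v ∈ S) with hF
  set T : Finset (Sym2 (Fin n)) :=
    G.edgeFinset.filter (fun e => ∀ v ∈ e, v ∈ S) with hT
  have hTF : T.card + F.card = G.edgeFinset.card := by
    rw [hT, hF]; exact Finset.card_filter_add_card_filter_not _
  -- deleting F gives a balanced graph
  have hadj : ∀ ⦃a b : Fin n⦄, (G.deleteEdges ↑F).Adj a b → a ∈ S ∧ b ∈ S := by
    intro a b hab
    rw [SimpleGraph.deleteEdges_adj] at hab
    obtain ⟨hab, hnF⟩ := hab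
    have : s(a, b) ∉ F := hnF
    rw [hF, Finset.mem_filter, not_and, not_not] at this
    have h2 := this (by simpa using hab)
    exact ⟨h2 a (by simp), h2 b (by simp)⟩
  have hbal : IsBalanced (G.deleteEdges ↑F) σ := by
    intro u w hw
    have hle : G.deleteEdges ↑F ≤ G := SimpleGraph.deleteEdges_le _
    have huS : u ∈ S := by
      cases w with
      | nil => exact absurd hw (by simp [SimpleGraph.Walk.isCycle_def])
      | cons h p => exact (hadj h).1
    have hsupp : ∀ x ∈ w.support, x ∈ S :=
      support_subset_of_adj_subset (fun a b h => (hadj h).1) w huS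
    have := hS.2 u (w.mapLe hle) (hw.mapLe hle) (by
      intro v hv
      rw [support_mapLe] at hv
      exact hsupp v hv)
    rwa [walkSign_mapLe] at this
  have hεF : ε ≤ F.card := hε.2 ⟨F, by
    intro e he
    simp only [hF, Finset.coe_filter, Set.mem_setOf_eq] at he
    exact (SimpleGraph.mem_edgeFinset).1 he.1, hbal, rfl⟩
  -- clique edge count
  have hchoose : ωb.choose 2 ≤ T.card := by
    have hcard : (⊤ : SimpleGraph {x // x ∈ S}).edgeFinset.card = ωb.choose 2 := by
      rw [SimpleGraph.card_edgeFinset_top_eq_card_choose_two, Fintype.card_coe, hScard]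
    rw [← hcard]
    apply Finset.card_le_card_of_injOn (Sym2.map Subtype.val)
    · intro e he
      rw [Finset.mem_coe, SimpleGraph.mem_edgeFinset] at he; rw [Finset.mem_coe]
      induction e with
      | _ a b =>
        simp only [SimpleGraph.mem_edgeSet, SimpleGraph.top_adj] at he
        have hadj' : G.Adj a.val b.val := hS.1 a.2 b.2 (fun h => he (Subtype.ext h))
        rw [hT, Finset.mem_filter]
        constructor
        · rw [SimpleGraph.mem_edgeFinset]; exact hadj'
        · intro v hv
          rw [Sym2.map_pair_eq, Sym2.mem_iff] at hv
          rcases hv with rfl | rfl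
          · exact a.2
          · exact b.2
    · exact Set.injOn_of_injective (Sym2.map.injective Subtype.val_injective)
  have key : ωb.choose 2 + ε ≤ G.edgeFinset.card := by
    omega
  have hreal : (ωb : ℝ) * ((ωb : ℝ) - 1) / 2 ≤ (G.edgeFinset.card : ℝ) - ε := by
    have : ((ωb.choose 2 : ℕ) : ℝ) + (ε : ℝ) ≤ (G.edgeFinset.card : ℝ) := by
      exact_mod_cast key
    rw [Nat.cast_choose_two] at this
    linarith
  refine ⟨hreal, ?_⟩
  rw [Int.le_floor]
  push_cast
  have h0 : (0 : ℝ) ≤ (ωb : ℝ) := Nat.cast_nonneg _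
  have hsq : ((ωb : ℝ) - 1/2) ^ 2 ≤ 2 * ((G.edgeFinset.card : ℝ) - ε) + 1/4 := by
    ring_nf
    nlinarith [hreal]
  have hs : (ωb : ℝ) - 1/2 ≤ Real.sqrt (2 * ((G.edgeFinset.card : ℝ) - ε) + 1/4) := by
    rcases le_or_gt ((ωb : ℝ) - 1/2) 0 with h | h
    · exact h.trans (Real.sqrt_nonneg _)
    · rw [Real.le_sqrt h.le]
      · exact hsq
      · nlinarith [sq_nonneg ((ωb : ℝ) - 1/2)]
  linarith
end

section
/- Let Σ = (G, σ) be a signed graph with m edges and frustration index ε(Σ), and let λ₁(Σ) be the largest eigenvalue of its adjacency matrix A(Σ). Then λ₁(Σ) ≤ √( 2(m − ε(Σ)) · (1 − ⌊1/2 + √(2(m − ε(Σ)) + 1/4)⌋⁻¹) ). -/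
open Matrix Finset

set_option linter.unusedSectionVars false
set_option linter.unusedVariables false
set_option maxHeartbeats 1000000

section AuxMS
variable {V : Type*} [Fintype V] [DecidableEq V]

def pairSum (D : Finset (V × V)) (w : V → ℝ) : ℝ := ∑ p ∈ D, w p.1 * w p.2

def rowSum (D : Finset (V × V)) (u : V) (w : V → ℝ) : ℝ :=
  (∑ p ∈ D.filter (fun p => p.1 = u), w p.2) + ∑ p ∈ D.filter (fun p => p.2 = u), w p.1

lemma pairSum_update (D : Finset (V × V)) (w : V → ℝ) (u : V) (hu : (u,u) ∉ D) (t : ℝ) :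
    pairSum D (Function.update w u t) = pairSum D w + (t - w u) * rowSum D u w := by
  unfold pairSum rowSum
  have key : ∀ p ∈ D, Function.update w u t p.1 * Function.update w u t p.2
      = w p.1 * w p.2 + ((if p.1 = u then (t - w u) * w p.2 else 0)
        + if p.2 = u then w p.1 * (t - w u) else 0) := by
    rintro ⟨i, j⟩ hp
    by_cases hi : i = u <;> by_cases hj : j = u
    · exact absurd (by rw [hi, hj] at hp; exact hp) hu
    · subst hi; simp [Function.update_apply, hj]; ring
    · subst hj; simp [Function.update_apply, hi]; ring
    · simp [Function.update_apply, hi, hj]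
  rw [Finset.sum_congr rfl key, Finset.sum_add_distrib, Finset.sum_add_distrib,
    ← Finset.sum_filter, ← Finset.sum_filter]
  have h1 : ∑ p ∈ D.filter (fun p => p.1 = u), (t - w u) * w p.2
      = (t - w u) * ∑ p ∈ D.filter (fun p => p.1 = u), w p.2 := by rw [Finset.mul_sum]
  have h2 : ∑ p ∈ D.filter (fun p => p.2 = u), w p.1 * (t - w u)
      = (t - w u) * ∑ p ∈ D.filter (fun p => p.2 = u), w p.1 := by
    rw [Finset.mul_sum]; exact Finset.sum_congr rfl fun p _ => mul_comm _ _
  rw [h1, h2]; ring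

lemma pairSum_step (D : Finset (V × V)) (w : V → ℝ) (a b : V) (hab : a ≠ b)
    (hwb : 0 ≤ w b)
    (ha : (a,a) ∉ D) (hb : (b,b) ∉ D) (hD : (a,b) ∉ D) (hD' : (b,a) ∉ D)
    (hQ : rowSum D b w ≤ rowSum D a w) :
    pairSum D w ≤ pairSum D (Function.update (Function.update w a (w a + w b)) b 0) := by
  set w1 := Function.update w a (w a + w b) with hw1
  have h1 : pairSum D w1 = pairSum D w + (w b) * rowSum D a w := by
    have := pairSum_update D w a ha (w a + w b)
    rw [hw1, this]; ring_nf
  have hw1b : w1 b = w b := Function.update_of_ne (Ne.symm hab) _ w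
  have h2 : pairSum D (Function.update w1 b 0) = pairSum D w1 + (0 - w b) * rowSum D b w1 := by
    rw [pairSum_update D w1 b hb 0, hw1b]
  have hrow : rowSum D b w1 = rowSum D b w := by
    unfold rowSum
    congr 1
    · apply Finset.sum_congr rfl
      intro p hp
      rw [Finset.mem_filter] at hp
      have hpa : p.2 ≠ a := by
        intro h
        apply hD'
        have hpe : p = (b, a) := by obtain ⟨x, y⟩ := p; simp only [Prod.mk.injEq]; exact ⟨hp.2, h⟩
        exact hpe ▸ hp.1
      rw [hw1]
      exact Function.update_of_ne hpa _ w
    · apply Finset.sum_congr rfl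
      intro p hp
      rw [Finset.mem_filter] at hp
      have hpa : p.1 ≠ a := by
        intro h
        apply hD
        have hpe : p = (a, b) := by obtain ⟨x, y⟩ := p; simp only [Prod.mk.injEq]; exact ⟨h, hp.2⟩
        exact hpe ▸ hp.1
      rw [hw1]
      exact Function.update_of_ne hpa _ w
  rw [h2, hrow, h1]
  nlinarith [mul_nonneg hwb (sub_nonneg.mpr hQ)]


lemma motzkinStraus (D : Finset (V × V)) (hsym : ∀ p ∈ D, p.swap ∈ D)
    (hirr : ∀ v : V, (v,v) ∉ D) (c : ℕ) (hc1 : 1 ≤ c)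
    (hc : ∀ S : Finset V, (∀ a ∈ S, ∀ b ∈ S, a ≠ b → (a,b) ∈ D) → S.card ≤ c) :
    ∀ N (w : V → ℝ), (∀ v, 0 ≤ w v) → ∑ v, w v = 1 →
      (univ.filter fun v => w v ≠ 0).card ≤ N → pairSum D w ≤ 1 - 1 / (c : ℝ) := by
  intro N
  induction N with
  | zero =>
    intro w hw hsum hcard
    exfalso
    have hemp : (univ.filter fun v => w v ≠ 0) = ∅ := Finset.card_eq_zero.mp (Nat.le_zero.mp hcard)
    have hz : ∀ v, w v = 0 := by
      intro v
      by_contra h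
      have hv : v ∈ (univ.filter fun v => w v ≠ 0) := Finset.mem_filter.mpr ⟨Finset.mem_univ v, h⟩
      rw [hemp] at hv
      exact absurd hv (Finset.notMem_empty v)
    rw [Finset.sum_eq_zero (fun v _ => hz v)] at hsum
    norm_num at hsum
  | succ N ih =>
    intro w hw hsum hcard
    by_cases hex : ∃ a ∈ (univ.filter fun v => w v ≠ 0), ∃ b ∈ (univ.filter fun v => w v ≠ 0),
        a ≠ b ∧ (a,b) ∉ D
    · -- non-clique case: shift mass and use induction
      have main : ∀ (a b : V), a ∈ (univ.filter fun v => w v ≠ 0) →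
          b ∈ (univ.filter fun v => w v ≠ 0) → a ≠ b → (a,b) ∉ D → (b,a) ∉ D →
          rowSum D b w ≤ rowSum D a w → pairSum D w ≤ 1 - 1 / (c:ℝ) := by
        intro a b ha hb hab hD hD' hQ
        set w' := Function.update (Function.update w a (w a + w b)) b 0 with hw'def
        have hstep := pairSum_step D w a b hab (hw b) (hirr a) (hirr b) hD hD' hQ
        have hw'v : ∀ v, w' v = if v = b then 0 else if v = a then w a + w b else w v := by
          intro v
          rw [hw'def]
          by_cases hvb : v = b
          · subst hvb; simp [Function.update_apply]
          · by_cases hva : v = a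
            · subst hva; simp [Function.update_apply, hvb]
            · simp [Function.update_apply, hva, hvb]
        have hw'nn : ∀ v, 0 ≤ w' v := by
          intro v; rw [hw'v]
          split_ifs with h1 h2
          · exact le_rfl
          · exact add_nonneg (hw a) (hw b)
          · exact hw v
        have haeb : a ∈ univ.erase b := Finset.mem_erase.mpr ⟨hab, Finset.mem_univ a⟩
        have hsum' : ∑ v, w' v = 1 := by
          rw [hw'def]
          rw [Finset.sum_update_of_mem (Finset.mem_univ b), Finset.sdiff_singleton_eq_erase]
          rw [Finset.sum_update_of_mem haeb, Finset.sdiff_singleton_eq_erase]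
          have h1 : ∑ v ∈ univ, w v = w b + ∑ v ∈ univ.erase b, w v :=
            (Finset.add_sum_erase univ w (Finset.mem_univ b)).symm
          have h2 : ∑ v ∈ univ.erase b, w v = w a + ∑ v ∈ (univ.erase b).erase a, w v :=
            (Finset.add_sum_erase _ w haeb).symm
          rw [h1, h2] at hsum
          linarith
        have hsupp' : (univ.filter fun v => w' v ≠ 0) ⊆ (univ.filter fun v => w v ≠ 0).erase b := by
          intro v hv
          rw [Finset.mem_filter] at hv
          rw [hw'v] at hv
          rcases hv with ⟨-, hv⟩
          by_cases hvb : v = b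
          · rw [if_pos hvb] at hv; exact absurd rfl hv
          · rw [if_neg hvb] at hv
            refine Finset.mem_erase.mpr ⟨hvb, ?_⟩
            by_cases hva : v = a
            · subst hva; exact ha
            · rw [if_neg hva] at hv
              exact Finset.mem_filter.mpr ⟨Finset.mem_univ v, hv⟩
        have hcard' : (univ.filter fun v => w' v ≠ 0).card ≤ N := by
          have hb' : b ∈ (univ.filter fun v => w v ≠ 0) := hb
          have h1 := Finset.card_le_card hsupp'
          rw [Finset.card_erase_of_mem hb'] at h1
          omega
        exact le_trans hstep (ih w' hw'nn hsum' hcard')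
      obtain ⟨a, ha, b, hb, hab, hD⟩ := hex
      have hD' : (b, a) ∉ D := fun h => hD (hsym _ h)
      rcases le_total (rowSum D b w) (rowSum D a w) with h | h
      · exact main a b ha hb hab hD hD' h
      · exact main b a hb ha hab.symm hD' hD h
    · -- clique case
      push_neg at hex
      set supp := univ.filter fun v => w v ≠ 0 with hsupp
      have hclique : ∀ a ∈ supp, ∀ b ∈ supp, a ≠ b → (a,b) ∈ D := hex
      have hcardc : supp.card ≤ c := hc supp hclique
      have hsumsupp : ∑ v ∈ supp, w v = 1 := by
        rw [hsupp, Finset.sum_filter_ne_zero]; exact hsum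
      have hne : 0 < supp.card := by
        rcases Finset.eq_empty_or_nonempty supp with h | h
        · rw [h] at hsumsupp; simp at hsumsupp
        · exact Finset.card_pos.mpr h
      have h1 : pairSum D w = ∑ p ∈ D.filter (fun p => p.1 ∈ supp ∧ p.2 ∈ supp), w p.1 * w p.2 := by
        unfold pairSum
        symm
        apply Finset.sum_subset (Finset.filter_subset _ _)
        intro p hp hnp
        rw [Finset.mem_filter] at hnp
        push_neg at hnp
        by_cases h : p.1 ∈ supp
        · have h2 : w p.2 = 0 := by
            by_contra hcon
            exact (hnp hp h) (Finset.mem_filter.mpr ⟨Finset.mem_univ _, hcon⟩)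
          rw [h2, mul_zero]
        · have h2 : w p.1 = 0 := by
            by_contra hcon
            exact h (Finset.mem_filter.mpr ⟨Finset.mem_univ _, hcon⟩)
          rw [h2, zero_mul]
      have h2 : D.filter (fun p => p.1 ∈ supp ∧ p.2 ∈ supp) ⊆ supp.offDiag := by
        intro p hp
        rw [Finset.mem_filter] at hp
        rw [Finset.mem_offDiag]
        refine ⟨hp.2.1, hp.2.2, ?_⟩
        intro h
        apply hirr p.1
        have hpe : p = (p.1, p.1) := by
          obtain ⟨x, y⟩ := p; simp only [Prod.mk.injEq, true_and]; exact h.symm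
        exact hpe ▸ hp.1
      have h3 : pairSum D w ≤ ∑ p ∈ supp.offDiag, w p.1 * w p.2 := by
        rw [h1]
        apply Finset.sum_le_sum_of_subset_of_nonneg h2
        intro p _ _
        exact mul_nonneg (hw p.1) (hw p.2)
      have h4 : ∑ p ∈ supp.offDiag, w p.1 * w p.2
          = 1 - ∑ v ∈ supp, w v * w v := by
        have hprod : ∑ p ∈ supp ×ˢ supp, w p.1 * w p.2
            = (∑ v ∈ supp, w v) * (∑ v ∈ supp, w v) := by
          rw [Finset.sum_mul_sum, Finset.sum_product]
        have hunion : ∑ p ∈ supp ×ˢ supp, w p.1 * w p.2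
            = ∑ p ∈ supp.diag, w p.1 * w p.2 + ∑ p ∈ supp.offDiag, w p.1 * w p.2 := by
          rw [← Finset.diag_union_offDiag supp,
            Finset.sum_union (Finset.disjoint_diag_offDiag supp)]
        have hdiag : ∑ p ∈ supp.diag, w p.1 * w p.2 = ∑ v ∈ supp, w v * w v :=
          Finset.sum_diag supp (fun p => w p.1 * w p.2)
        rw [hdiag] at hunion
        rw [hprod, hsumsupp] at hunion
        linarith
      have h5 : 1 / (supp.card : ℝ) ≤ ∑ v ∈ supp, w v * w v := by
        have := sq_sum_le_card_mul_sum_sq (s := supp) (f := w)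
        rw [hsumsupp] at this
        have hc0 : (0:ℝ) < (supp.card : ℝ) := by exact_mod_cast hne
        rw [div_le_iff₀ hc0]
        have heq : ∑ v ∈ supp, w v * w v = ∑ v ∈ supp, w v ^ 2 := by
          apply Finset.sum_congr rfl; intro v _; ring
        rw [heq]
        calc (1:ℝ) = 1 ^ 2 := by norm_num
        _ ≤ (supp.card : ℝ) * ∑ v ∈ supp, w v ^ 2 := by exact_mod_cast this
        _ = (∑ v ∈ supp, w v ^ 2) * (supp.card:ℝ) := by ring
      have h6 : 1 / (c:ℝ) ≤ 1 / (supp.card : ℝ) := by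
        apply one_div_le_one_div_of_le
        · exact_mod_cast hne
        · exact_mod_cast hcardc
      linarith


lemma nikiforov (D : Finset (V × V)) (hsym : ∀ p ∈ D, p.swap ∈ D)
    (hirr : ∀ v : V, (v,v) ∉ D) (c : ℕ) (hc1 : 1 ≤ c)
    (hc : ∀ S : Finset V, (∀ a ∈ S, ∀ b ∈ S, a ≠ b → (a,b) ∈ D) → S.card ≤ c)
    (z : V → ℝ) (hz : ∑ v, z v ^ 2 = 1) :
    ∑ p ∈ D, |z p.1| * |z p.2| ≤ Real.sqrt ((D.card : ℝ) * (1 - 1 / (c : ℝ))) := by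
  have hMS : pairSum D (fun v => z v ^ 2) ≤ 1 - 1 / (c:ℝ) :=
    motzkinStraus D hsym hirr c hc1 hc _ _ (fun v => sq_nonneg (z v)) hz le_rfl
  have hCS : (∑ p ∈ D, |z p.1| * |z p.2|) ^ 2
      ≤ (∑ p ∈ D, (|z p.1| * |z p.2|) ^ 2) * ∑ p ∈ D, (1:ℝ) ^ 2 := by
    have := sum_mul_sq_le_sq_mul_sq D (fun p => |z p.1| * |z p.2|) (fun _ => (1:ℝ))
    simpa using this
  have heq : ∑ p ∈ D, (|z p.1| * |z p.2|) ^ 2 = pairSum D (fun v => z v ^ 2) := by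
    unfold pairSum
    apply Finset.sum_congr rfl
    intro p _
    rw [mul_pow, sq_abs, sq_abs]
  have hone : ∑ p ∈ D, (1:ℝ) ^ 2 = (D.card : ℝ) := by simp
  apply Real.le_sqrt_of_sq_le
  calc (∑ p ∈ D, |z p.1| * |z p.2|) ^ 2
      ≤ pairSum D (fun v => z v ^ 2) * (D.card : ℝ) := by rw [← heq, ← hone]; exact hCS
    _ ≤ (1 - 1/(c:ℝ)) * (D.card : ℝ) := by
        apply mul_le_mul_of_nonneg_right hMS (by positivity)
    _ = (D.card : ℝ) * (1 - 1/(c:ℝ)) := by ring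

end AuxMS

lemma walkSign_eta {V : Type*} {G' : SimpleGraph V} (σ : V → V → ℝ) (η : V → ℝ)
    (hη : ∀ v, η v * η v = 1) :
    ∀ {u v : V} (w : G'.Walk u v),
      (∀ d ∈ w.darts, σ d.toProd.1 d.toProd.2 = η d.toProd.1 * η d.toProd.2) →
      walkSign σ w = η u * η v := by
  intro u v w
  induction w with
  | nil =>
    intro _
    simp [walkSign, hη]
  | @cons u b v h p ih =>
    intro hd
    have hdart : σ u b = η u * η b := by
      have := hd ⟨(u, b), h⟩ (by rw [SimpleGraph.Walk.darts_cons]; exact List.mem_cons_self)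
      exact this
    have hrest : walkSign σ p = η b * η v := by
      apply ih
      intro d hdm
      exact hd d (by rw [SimpleGraph.Walk.darts_cons]; exact List.mem_cons_of_mem _ hdm)
    have : walkSign σ (SimpleGraph.Walk.cons h p) = σ u b * walkSign σ p := by
      unfold walkSign
      rw [SimpleGraph.Walk.darts_cons, List.map_cons, List.prod_cons]
    rw [this, hdart, hrest]
    calc η u * η b * (η b * η v) = η u * (η b * η b) * η v := by ring
      _ = η u * η v := by rw [hη b, mul_one]



/-- `λ₁(Σ) ≤ √(2(m - ε(Σ))(1 - ⌊1/2 + √(2(m - ε(Σ)) + 1/4)⌋⁻¹))`. -/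
theorem stmt_8 {n : ℕ} (G : SimpleGraph (Fin n)) [DecidableRel G.Adj]
    (σ : Fin n → Fin n → ℝ) (hσ : IsSignFn G σ)
    (hA : (signedAdj G σ).IsHermitian)
    (lam1 : ℝ) (hlam : IsGreatest (Set.range hA.eigenvalues) lam1)
    (ε : ℕ) (hε : IsLeast (FrustrationSet G σ) ε) :
    lam1 ≤ Real.sqrt (2 * ((G.edgeFinset.card : ℝ) - ε) *
      (1 - ((⌊(1 / 2 : ℝ) + Real.sqrt (2 * ((G.edgeFinset.card : ℝ) - ε) + 1 / 4)⌋ : ℝ))⁻¹)) := by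
  classical
  rcases le_or_gt lam1 0 with hneg | hpos
  · exact hneg.trans (Real.sqrt_nonneg _)
  set m := G.edgeFinset.card with hm
  -- ε ≤ m
  have hεm : ε ≤ m := by
    apply hε.2
    refine ⟨G.edgeFinset, by simp, ?_, rfl⟩
    intro u w hcyc
    exfalso
    cases w with
    | nil => exact hcyc.ne_nil rfl
    | cons h p =>
      rw [SimpleGraph.deleteEdges_adj] at h
      exact h.2 (by simpa using h.1)
  -- eigenvector
  obtain ⟨idx, hidx⟩ := hlam.1
  set x : Fin n → ℝ := ⇑(hA.eigenvectorBasis idx) with hxdef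
  have hx1 : ∑ v, x v ^ 2 = 1 := by
    have hnorm : ‖hA.eigenvectorBasis idx‖ = 1 := hA.eigenvectorBasis.orthonormal.1 idx
    rw [EuclideanSpace.norm_eq] at hnorm
    have h2 : ∑ v, ‖(hA.eigenvectorBasis idx) v‖ ^ 2 = 1 := by
      have h3 := congrArg (fun t : ℝ => t ^ 2) hnorm
      simp only at h3
      rwa [Real.sq_sqrt (by positivity), one_pow] at h3
    calc ∑ v, x v ^ 2 = ∑ v, ‖(hA.eigenvectorBasis idx) v‖ ^ 2 := by
          apply Finset.sum_congr rfl
          intro v _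
          rw [Real.norm_eq_abs, sq_abs]
      _ = 1 := h2
  have hAx : (signedAdj G σ) *ᵥ x = lam1 • x := by
    rw [← hidx]; exact hA.mulVec_eigenvectorBasis idx
  have hlam_eq : lam1 = ∑ i, ∑ j, x i * (signedAdj G σ i j * x j) := by
    have h1 : ∑ i, x i * ((signedAdj G σ) *ᵥ x) i = lam1 := by
      rw [hAx]
      simp only [Pi.smul_apply, smul_eq_mul]
      have h2 : ∑ i, x i * (lam1 * x i) = lam1 * ∑ i, x i ^ 2 := by
        rw [Finset.mul_sum]
        apply Finset.sum_congr rfl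
        intro i _
        ring
      rw [h2, hx1, mul_one]
    rw [← h1]
    apply Finset.sum_congr rfl
    intro i _
    simp [Matrix.mulVec, dotProduct, Finset.mul_sum]
  -- the positive-pair set
  set D : Finset (Fin n × Fin n) :=
    univ.filter (fun p => G.Adj p.1 p.2 ∧ 0 < σ p.1 p.2 * x p.1 * x p.2) with hD
  have hDsym : ∀ p ∈ D, p.swap ∈ D := by
    intro p hp
    rw [hD, Finset.mem_filter] at hp ⊢
    simp only [Prod.fst_swap, Prod.snd_swap]
    refine ⟨Finset.mem_univ _, hp.2.1.symm, ?_⟩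
    calc (0:ℝ) < σ p.1 p.2 * x p.1 * x p.2 := hp.2.2
      _ = σ p.2 p.1 * x p.2 * x p.1 := by rw [hσ.1 p.1 p.2]; ring
  have hDirr : ∀ v : Fin n, (v,v) ∉ D := by
    intro v hv
    rw [hD, Finset.mem_filter] at hv
    exact G.irrefl hv.2.1
  have hbound : lam1 ≤ ∑ p ∈ D, |x p.1| * |x p.2| := by
    rw [hlam_eq]
    have h2 : ∑ i, ∑ j, x i * (signedAdj G σ i j * x j)
        = ∑ p : Fin n × Fin n, x p.1 * (signedAdj G σ p.1 p.2 * x p.2) := by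
      rw [Fintype.sum_prod_type]
    have h3 : ∑ p ∈ D, |x p.1| * |x p.2|
        = ∑ p : Fin n × Fin n, if (G.Adj p.1 p.2 ∧ 0 < σ p.1 p.2 * x p.1 * x p.2)
            then |x p.1| * |x p.2| else 0 := by
      rw [hD, Finset.sum_filter]
    rw [h2, h3]
    apply Finset.sum_le_sum
    intro p _
    by_cases hadj : G.Adj p.1 p.2
    · have hsa : signedAdj G σ p.1 p.2 = σ p.1 p.2 := if_pos hadj
      by_cases hposi : 0 < σ p.1 p.2 * x p.1 * x p.2
      · rw [if_pos ⟨hadj, hposi⟩, hsa]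
        rcases hσ.2 p.1 p.2 hadj with h1 | h1 <;> rw [h1]
        · calc x p.1 * (1 * x p.2) = x p.1 * x p.2 := by ring
            _ ≤ |x p.1 * x p.2| := le_abs_self _
            _ = |x p.1| * |x p.2| := abs_mul _ _
        · calc x p.1 * (-1 * x p.2) = -(x p.1 * x p.2) := by ring
            _ ≤ |x p.1 * x p.2| := neg_le_abs _
            _ = |x p.1| * |x p.2| := abs_mul _ _
      · rw [if_neg (by tauto), hsa]
        calc x p.1 * (σ p.1 p.2 * x p.2) = σ p.1 p.2 * x p.1 * x p.2 := by ring
          _ ≤ 0 := not_lt.mp hposi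
    · rw [if_neg (by tauto)]
      have hsa : signedAdj G σ p.1 p.2 = 0 := if_neg hadj
      rw [hsa]
      simp
  -- combinatorial bound |D| ≤ 2(m-ε)
  have hDcard : D.card ≤ 2 * (m - ε) := by
    set I : Finset (Sym2 (Fin n)) := D.image Sym2.mk.uncurry with hI
    have hIedge : I ⊆ G.edgeFinset := by
      intro e he
      rw [hI, Finset.mem_image] at he
      obtain ⟨p, hp, rfl⟩ := he
      rw [hD, Finset.mem_filter] at hp
      rw [SimpleGraph.mem_edgeFinset]
      exact hp.2.1
    set F' : Finset (Sym2 (Fin n)) := G.edgeFinset \ I with hF'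
    have hbal : IsBalanced (G.deleteEdges ↑F') σ := by
      intro u w hcyc
      set η : Fin n → ℝ := fun v => if x v < 0 then -1 else 1 with hη
      have hη2 : ∀ v, η v * η v = 1 := by
        intro v
        rw [hη]
        dsimp only
        split_ifs <;> norm_num
      have hws := walkSign_eta σ η hη2 w ?darts
      · rw [hws]; exact hη2 u
      case darts =>
        intro d hd
        have hadj := d.adj
        rw [SimpleGraph.deleteEdges_adj] at hadj
        obtain ⟨hGadj, hne⟩ := hadj
        have hedge : s(d.toProd.1, d.toProd.2) ∈ I := by
          have hef : s(d.toProd.1, d.toProd.2) ∈ G.edgeFinset := by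
            rw [SimpleGraph.mem_edgeFinset]
            exact hGadj
          by_contra hcon
          apply hne
          exact Finset.mem_coe.mpr (Finset.mem_sdiff.mpr ⟨hef, hcon⟩)
        rw [hI, Finset.mem_image] at hedge
        obtain ⟨q, hq, hqe⟩ := hedge
        have hmemD : (d.toProd.1, d.toProd.2) ∈ D := by
          obtain ⟨q1, q2⟩ := q
          rw [Function.uncurry_apply_pair, Sym2.eq_iff] at hqe
          rcases hqe with ⟨h1, h2⟩ | ⟨h1, h2⟩
          · rwa [← h1, ← h2]
          · have hsw := hDsym (q1, q2) hq
            have : Prod.swap (q1, q2) = (q2, q1) := rfl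
            rw [this] at hsw
            rwa [← h1, ← h2]
        rw [hD, Finset.mem_filter] at hmemD
        have hadj2 := hmemD.2.1
        have hpos2 := hmemD.2.2
        rcases hσ.2 _ _ hadj2 with h1 | h1 <;> rw [h1] at hpos2 ⊢
        · have hp : 0 < x d.toProd.1 * x d.toProd.2 := by nlinarith
          rcases mul_pos_iff.mp hp with ⟨ha', hb'⟩ | ⟨ha', hb'⟩
          · simp [hη, not_lt.mpr (le_of_lt ha'), not_lt.mpr (le_of_lt hb')]
          · simp [hη, ha', hb']
        · have hp : x d.toProd.1 * x d.toProd.2 < 0 := by nlinarith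
          rcases mul_neg_iff.mp hp with ⟨ha', hb'⟩ | ⟨ha', hb'⟩
          · simp [hη, not_lt.mpr (le_of_lt ha'), hb']
          · simp [hη, ha', not_lt.mpr (le_of_lt hb')]
    have hF'sub : (↑F' : Set (Sym2 (Fin n))) ⊆ G.edgeSet := by
      intro e he
      rw [Finset.mem_coe, hF', Finset.mem_sdiff] at he
      exact SimpleGraph.mem_edgeFinset.mp he.1
    have hεF : ε ≤ F'.card := hε.2 ⟨F', hF'sub, hbal, rfl⟩
    have hIm : I.card ≤ m := Finset.card_le_card hIedge
    have hFc : F'.card = m - I.card := by rw [hF']; exact Finset.card_sdiff_of_subset hIedge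
    have hDI : D.card ≤ 2 * I.card := by
      rw [hI]
      apply Finset.card_le_mul_card_image
      intro e he
      rw [Finset.mem_image] at he
      obtain ⟨p, hp, rfl⟩ := he
      have hsub : D.filter (fun q => Sym2.mk.uncurry q = Sym2.mk.uncurry p) ⊆ {p, p.swap} := by
        intro q hq
        rw [Finset.mem_filter] at hq
        obtain ⟨q1, q2⟩ := q
        obtain ⟨p1, p2⟩ := p
        rw [Function.uncurry_apply_pair, Function.uncurry_apply_pair, Sym2.eq_iff] at hq
        rcases hq.2 with ⟨h1, h2⟩ | ⟨h1, h2⟩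
        · subst h1; subst h2; simp
        · subst h1; subst h2; simp [Prod.swap]
      calc (D.filter (fun q => Sym2.mk.uncurry q = Sym2.mk.uncurry p)).card
          ≤ ({p, p.swap} : Finset (Fin n × Fin n)).card := Finset.card_le_card hsub
        _ ≤ 2 := by
            apply le_trans (Finset.card_insert_le _ _)
            simp
    omega
  -- the clique bound
  set K : ℤ := ⌊(1 / 2 : ℝ) + Real.sqrt (2 * ((m : ℝ) - ε) + 1 / 4)⌋ with hK
  have hm' : (0:ℝ) ≤ 2 * ((m:ℝ) - ε) := by
    have : (ε:ℝ) ≤ (m:ℝ) := by exact_mod_cast hεm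
    linarith
  have hK1 : 1 ≤ K := by
    rw [hK]
    apply Int.le_floor.mpr
    push_cast
    have : (1/2 : ℝ) ≤ Real.sqrt (2 * ((m : ℝ) - ε) + 1 / 4) := by
      apply (Real.le_sqrt (by norm_num) (by linarith)).mpr
      nlinarith [hm']
    linarith
  set c : ℕ := K.toNat with hc
  have hc1 : 1 ≤ c := by omega
  have hcK : (c : ℝ) = (K : ℝ) := by
    have : (c : ℤ) = K := Int.toNat_of_nonneg (by omega)
    exact_mod_cast this
  have hclique : ∀ S : Finset (Fin n), (∀ a ∈ S, ∀ b ∈ S, a ≠ b → (a,b) ∈ D) → S.card ≤ c := by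
    intro S hS
    have hoff : S.offDiag ⊆ D := by
      intro p hp
      rw [Finset.mem_offDiag] at hp
      have h1 := hS p.1 hp.1 p.2 hp.2.1 hp.2.2
      exact h1
    have hcard2 : S.card * S.card - S.card ≤ 2 * (m - ε) := by
      rw [← Finset.offDiag_card]
      exact le_trans (Finset.card_le_card hoff) hDcard
    by_cases hS0 : S.card = 0
    · omega
    have hS1 : 1 ≤ S.card := Nat.one_le_iff_ne_zero.mpr hS0
    have htr : ((S.card:ℝ)) * (S.card:ℝ) - (S.card:ℝ) ≤ 2 * ((m:ℝ) - ε) := by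
      have hle : S.card ≤ S.card * S.card := Nat.le_mul_of_pos_left S.card (by omega)
      have h1 : ((S.card * S.card - S.card : ℕ) : ℝ) = (S.card:ℝ)*(S.card:ℝ) - S.card := by
        push_cast [Nat.cast_sub hle]
        ring
      have h2 : ((2 * (m - ε) : ℕ):ℝ) = 2 * ((m:ℝ) - ε) := by
        push_cast [Nat.cast_sub hεm]
        ring
      rw [← h1, ← h2]
      exact_mod_cast hcard2
    have hts : (S.card:ℝ) ≤ 1/2 + Real.sqrt (2*((m:ℝ)-ε) + 1/4) := by
      have h0 : (0:ℝ) ≤ (S.card:ℝ) - 1/2 := by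
        have : (1:ℝ) ≤ (S.card:ℝ) := by exact_mod_cast hS1
        linarith
      have hsq : ((S.card:ℝ) - 1/2)^2 ≤ 2*((m:ℝ)-ε) + 1/4 := by nlinarith [htr]
      have := (Real.le_sqrt h0 (by linarith [hm'])).mpr hsq
      linarith
    have hKt : (S.card : ℤ) ≤ K := by
      rw [hK]
      apply Int.le_floor.mpr
      push_cast
      linarith [hts]
    omega
  -- assemble
  have hnik := nikiforov D hDsym hDirr c hc1 hclique (fun v => x v) hx1
  have hfinal : ((D.card : ℝ)) * (1 - 1 / (c:ℝ)) ≤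
      2 * ((m : ℝ) - ε) * (1 - ((K : ℝ))⁻¹) := by
    have h1 : (D.card : ℝ) ≤ 2 * ((m:ℝ) - ε) := by
      have := hDcard
      have h2 : ((2 * (m - ε) : ℕ) : ℝ) = 2 * ((m:ℝ) - ε) := by
        push_cast [Nat.cast_sub hεm]; ring
      calc (D.card : ℝ) ≤ ((2 * (m - ε) : ℕ) : ℝ) := by exact_mod_cast hDcard
        _ = _ := h2
    have h3 : (0:ℝ) ≤ 1 - 1/(c:ℝ) := by
      have : (1:ℝ) ≤ (c:ℝ) := by exact_mod_cast hc1
      have : 1/(c:ℝ) ≤ 1 := by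
        rw [div_le_one (by linarith)]; linarith
      linarith
    have h4 : (1 : ℝ) - 1/(c:ℝ) = 1 - ((K:ℝ))⁻¹ := by
      rw [one_div, hcK]
    rw [← h4]
    exact mul_le_mul_of_nonneg_right h1 h3
  calc lam1 ≤ ∑ p ∈ D, |x p.1| * |x p.2| := hbound
    _ ≤ Real.sqrt ((D.card : ℝ) * (1 - 1 / (c : ℝ))) := hnik
    _ ≤ _ := Real.sqrt_le_sqrt hfinal
end

section
/- Let Σ = (G, σ) be a signed graph with m edges and frustration index ε(Σ), and let λ₁(Σ) be the largest eigenvalue of its adjacency matrix A(Σ). Then λ₁(Σ) ≤ √(2(m − ε(Σ)) + 1/4) − 1/2. -/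
open Matrix Finset

lemma walkSign_telescope {V : Type*} {H : SimpleGraph V} (σ : V → V → ℝ) (η : V → ℝ)
    (hη : ∀ v, η v * η v = 1) (hσ : ∀ a b, H.Adj a b → σ a b = η a * η b) :
    ∀ {u v : V} (w : H.Walk u v), walkSign σ w = η u * η v := by
  intro u v w
  induction w with
  | nil => simp [walkSign, hη]
  | @cons a b c h p ih =>
    have h1 : walkSign σ (SimpleGraph.Walk.cons h p) = σ a b * walkSign σ p := by
      simp [walkSign]
    rw [h1, ih, hσ a b h]
    calc η a * η b * (η b * η c) = η a * η c * (η b * η b) := by ring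
    _ = η a * η c := by rw [hη b]; ring

/-- `λ₁(Σ) ≤ √(2(m - ε(Σ)) + 1/4) - 1/2`. -/
theorem stmt_9 {n : ℕ} (G : SimpleGraph (Fin n)) [DecidableRel G.Adj]
    (σ : Fin n → Fin n → ℝ) (hσ : IsSignFn G σ)
    (hA : (signedAdj G σ).IsHermitian)
    (lam1 : ℝ) (hlam : IsGreatest (Set.range hA.eigenvalues) lam1)
    (ε : ℕ) (hε : IsLeast (FrustrationSet G σ) ε) :
    lam1 ≤ Real.sqrt (2 * ((G.edgeFinset.card : ℝ) - ε) + 1 / 4) - 1 / 2 := by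
  classical
  obtain ⟨⟨i0, hi0⟩, -⟩ := hlam
  set A := signedAdj G σ with hAdef
  set x : Fin n → ℝ := ⇑(hA.eigenvectorBasis i0) with hxdef
  have hmul : A *ᵥ x = lam1 • x := by
    rw [← hi0]; exact hA.mulVec_eigenvectorBasis i0
  have hnorm : ∑ j, x j ^ 2 = 1 := by
    have hn1 : ‖hA.eigenvectorBasis i0‖ = 1 := hA.eigenvectorBasis.orthonormal.1 i0
    have h2 := EuclideanSpace.norm_eq (hA.eigenvectorBasis i0)
    rw [hn1] at h2
    have h3 : ∑ j, ‖x j‖ ^ 2 = 1 := Real.sqrt_eq_one.mp h2.symm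
    simpa [Real.norm_eq_abs, sq_abs] using h3
  have hquad : lam1 = ∑ a, ∑ b, x a * (A a b * x b) := by
    have h1 : ∑ a, x a * (A *ᵥ x) a = lam1 * ∑ a, x a ^ 2 := by
      rw [hmul, Finset.mul_sum]
      refine Finset.sum_congr rfl fun a _ => ?_
      simp only [Pi.smul_apply, smul_eq_mul]; ring
    have h2 : ∑ a, x a * (A *ᵥ x) a = ∑ a, ∑ b, x a * (A a b * x b) := by
      refine Finset.sum_congr rfl fun a _ => ?_
      simp [Matrix.mulVec, dotProduct, Finset.mul_sum]
    rw [← h2, h1, hnorm, mul_one]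
  set η : Fin n → ℝ := fun v => if x v < 0 then -1 else 1 with hηdef
  set y : Fin n → ℝ := fun v => |x v| with hydef
  have hy0 : ∀ v, 0 ≤ y v := fun v => abs_nonneg _
  have hη2 : ∀ v, η v * η v = 1 := by
    intro v; by_cases h : x v < 0 <;> simp [hηdef, h]
  have hxy : ∀ v, x v = η v * y v := by
    intro v; by_cases h : x v < 0
    · simp [hηdef, hydef, h, abs_of_neg h]
    · simp [hηdef, hydef, h, abs_of_nonneg (not_lt.mp h)]
  have hnormy : ∑ a, y a ^ 2 = 1 := by
    rw [← hnorm]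
    exact Finset.sum_congr rfl fun a _ => by rw [hydef]; simp [sq_abs]
  -- the good subgraph
  let G' : SimpleGraph (Fin n) :=
    { Adj := fun a b => G.Adj a b ∧ σ a b * (η a * η b) = 1
      symm := by
        constructor
        intro a b h
        refine ⟨h.1.symm, ?_⟩
        rw [hσ.1 b a, mul_comm (η b)]
        exact h.2
      loopless := ⟨fun a h => G.loopless.irrefl a h.1⟩ }
  haveI : DecidableRel G'.Adj := fun a b => Classical.dec _
  set B : Fin n → Fin n → ℝ := fun a b => if G'.Adj a b then 1 else 0 with hBdef
  have hBval : ∀ a b, B a b = if G'.Adj a b then 1 else 0 := fun _ _ => rfl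
  have hB0 : ∀ a b, 0 ≤ B a b := by
    intro a b; rw [hBval]; split <;> norm_num
  have hB1 : ∀ a b, B a b ≤ 1 := by
    intro a b; rw [hBval]; split <;> norm_num
  have hBB : ∀ a b, B a b * B a b = B a b := by
    intro a b; rw [hBval]; split <;> norm_num
  have hBsymm : ∀ a b, B a b = B b a := by
    intro a b; rw [hBval, hBval]
    by_cases h : G'.Adj a b
    · rw [if_pos h, if_pos h.symm]
    · rw [if_neg h, if_neg fun h' => h h'.symm]
  have hBdiag : ∀ a, B a a = 0 := by
    intro a; rw [hBval, if_neg (G'.loopless.irrefl a)]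
  -- entrywise bound
  have hkey : ∀ a b, x a * (A a b * x b) ≤ B a b * (y a * y b) := by
    intro a b
    by_cases hab : G.Adj a b
    · have hσab := hσ.2 a b hab
      have hAab : A a b = σ a b := if_pos hab
      rw [hAab, hxy a, hxy b]
      have hre : η a * y a * (σ a b * (η b * y b)) = σ a b * (η a * η b) * (y a * y b) := by
        ring
      rw [hre]
      by_cases hg : σ a b * (η a * η b) = 1
      · rw [hg, hBval, if_pos ⟨hab, hg⟩]
      · have hσ2 : σ a b * σ a b = 1 := by rcases hσab with h | h <;> rw [h] <;> norm_num
        have ht : (σ a b * (η a * η b)) * (σ a b * (η a * η b)) = 1 := by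
          calc (σ a b * (η a * η b)) * (σ a b * (η a * η b))
              = (σ a b * σ a b) * ((η a * η a) * (η b * η b)) := by ring
          _ = 1 := by rw [hσ2, hη2 a, hη2 b]; norm_num
        rcases mul_self_eq_one_iff.mp ht with h1 | h1
        · exact absurd h1 hg
        · rw [h1, hBval, if_neg (fun h' => hg h'.2)]
          have := mul_nonneg (hy0 a) (hy0 b)
          linarith
    · have hAab : A a b = 0 := if_neg hab
      rw [hAab, hBval, if_neg (fun h' => hab h'.1)]
      simp
  set S : ℝ := ∑ a, ∑ b, B a b * (y a * y b) with hSdef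
  have hlamS : lam1 ≤ S := by
    rw [hquad, hSdef]
    exact Finset.sum_le_sum fun a _ => Finset.sum_le_sum fun b _ => hkey a b
  set d : Fin n → ℝ := fun a => ∑ b, B a b with hddef
  set T : ℝ := ∑ a, d a with hTdef
  have hd0 : ∀ a, 0 ≤ d a := fun a => Finset.sum_nonneg fun b _ => hB0 a b
  set z : Fin n → ℝ := fun a => ∑ b, B a b * y b with hzdef
  have hSz : S = ∑ a, y a * z a := by
    refine Finset.sum_congr rfl fun a _ => ?_
    rw [hzdef]
    rw [Finset.mul_sum]
    refine Finset.sum_congr rfl fun b _ => ?_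
    ring
  -- Cauchy-Schwarz
  have hCS : S ^ 2 ≤ ∑ a, z a ^ 2 := by
    rw [hSz]
    calc (∑ a, y a * z a) ^ 2 ≤ (∑ a, y a ^ 2) * ∑ a, z a ^ 2 :=
          Finset.sum_mul_sq_le_sq_mul_sq univ y z
    _ = ∑ a, z a ^ 2 := by rw [hnormy, one_mul]
  have hz2 : ∀ a, z a ^ 2 ≤ d a * ∑ b, B a b * y b ^ 2 := by
    intro a
    have he : z a = ∑ b, B a b * (B a b * y b) := by
      rw [hzdef]
      refine Finset.sum_congr rfl fun b _ => ?_
      rw [← mul_assoc, hBB]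
    rw [he]
    calc (∑ b, B a b * (B a b * y b)) ^ 2
        ≤ (∑ b, B a b ^ 2) * ∑ b, (B a b * y b) ^ 2 :=
          Finset.sum_mul_sq_le_sq_mul_sq univ _ _
    _ = d a * ∑ b, B a b * y b ^ 2 := by
        congr 1
        · refine Finset.sum_congr rfl fun b _ => ?_
          rw [sq]; exact hBB a b
        · refine Finset.sum_congr rfl fun b _ => ?_
          rw [mul_pow, sq (B a b), hBB]
  have h4 : ∑ a, z a ^ 2 ≤ ∑ b, y b ^ 2 * (∑ a, B a b * d a) := by
    calc ∑ a, z a ^ 2 ≤ ∑ a, d a * ∑ b, B a b * y b ^ 2 :=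
          Finset.sum_le_sum fun a _ => hz2 a
    _ = ∑ b, y b ^ 2 * (∑ a, B a b * d a) := by
        simp_rw [Finset.mul_sum]
        rw [Finset.sum_comm]
        refine Finset.sum_congr rfl fun b _ => Finset.sum_congr rfl fun a _ => by ring
  have hSle : S ≤ ∑ b, y b ^ 2 * d b := by
    have step1 : S ≤ ∑ a, ∑ b, B a b * ((y a ^ 2 + y b ^ 2) / 2) := by
      rw [hSdef]
      refine Finset.sum_le_sum fun a _ => Finset.sum_le_sum fun b _ => ?_
      refine mul_le_mul_of_nonneg_left ?_ (hB0 a b)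
      nlinarith [sq_nonneg (y a - y b)]
    have step2 : ∑ a, ∑ b, B a b * ((y a ^ 2 + y b ^ 2) / 2) = ∑ b, y b ^ 2 * d b := by
      have e1 : ∀ a b, B a b * ((y a ^ 2 + y b ^ 2) / 2)
          = (B a b * y a ^ 2) / 2 + (B a b * y b ^ 2) / 2 := fun a b => by ring
      simp_rw [e1, Finset.sum_add_distrib]
      have e2 : ∑ a, ∑ b, (B a b * y a ^ 2) / 2 = (∑ a, y a ^ 2 * d a) / 2 := by
        rw [Finset.sum_div]
        refine Finset.sum_congr rfl fun a _ => ?_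
        rw [hddef]
        rw [Finset.mul_sum, Finset.sum_div]
        exact Finset.sum_congr rfl fun b _ => by ring
      have e3 : ∑ a, ∑ b, (B a b * y b ^ 2) / 2 = (∑ b, y b ^ 2 * d b) / 2 := by
        rw [Finset.sum_comm, Finset.sum_div]
        refine Finset.sum_congr rfl fun b _ => ?_
        rw [hddef]
        rw [Finset.mul_sum, Finset.sum_div]
        refine Finset.sum_congr rfl fun a _ => ?_
        rw [hBsymm b a]; ring
      rw [e2, e3]; ring
    exact step1.trans (le_of_eq step2)
  have hW : ∀ b, (∑ a, B a b * d a) + d b ≤ T := by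
    intro b
    have h1 : ∑ a, B a b * d a ≤ ∑ a, (if a = b then 0 else d a) := by
      refine Finset.sum_le_sum fun a _ => ?_
      by_cases h : a = b
      · subst h; rw [hBdiag, if_pos rfl, zero_mul]
      · rw [if_neg h]; exact mul_le_of_le_one_left (hd0 a) (hB1 a b)
    have h2 : ∑ a, (if a = b then (0:ℝ) else d a) + d b = T := by
      have e : ∀ a, (if a = b then (0:ℝ) else d a) = d a - (if a = b then d a else 0) := by
        intro a; by_cases h : a = b <;> simp [h]
      simp_rw [e]
      rw [Finset.sum_sub_distrib, Finset.sum_ite_eq' univ b d, if_pos (mem_univ b), hTdef]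
      ring
    linarith
  have hmain : S ^ 2 + S ≤ T := by
    calc S ^ 2 + S ≤ (∑ b, y b ^ 2 * (∑ a, B a b * d a)) + ∑ b, y b ^ 2 * d b :=
          add_le_add (hCS.trans h4) hSle
    _ = ∑ b, y b ^ 2 * ((∑ a, B a b * d a) + d b) := by
        rw [← Finset.sum_add_distrib]
        exact Finset.sum_congr rfl fun b _ => by ring
    _ ≤ ∑ b, y b ^ 2 * T := Finset.sum_le_sum fun b _ =>
          mul_le_mul_of_nonneg_left (hW b) (sq_nonneg _)
    _ = T := by rw [← Finset.sum_mul, hnormy, one_mul]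
  -- counting
  have hdeg : ∀ a, d a = (G'.degree a : ℝ) := by
    intro a
    rw [hddef]
    simp_rw [hBval]
    rw [Finset.sum_boole]
    rw [SimpleGraph.degree, SimpleGraph.neighborFinset_eq_filter]
  have hT2 : T = 2 * (G'.edgeFinset.card : ℝ) := by
    rw [hTdef, Finset.sum_congr rfl fun a _ => hdeg a, ← Nat.cast_sum,
      SimpleGraph.sum_degrees_eq_twice_card_edges]
    push_cast; ring
  have hsub : G' ≤ G := fun a b h => h.1
  have hGE : G'.edgeFinset ⊆ G.edgeFinset := SimpleGraph.edgeFinset_mono hsub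
  set F : Finset (Sym2 (Fin n)) := G.edgeFinset \ G'.edgeFinset with hFdef
  have hFcard : F.card + G'.edgeFinset.card = G.edgeFinset.card := by
    rw [hFdef]
    exact Finset.card_sdiff_add_card_eq_card hGE
  have hbal : IsBalanced (G.deleteEdges ↑F) σ := by
    intro u w _
    have hloc : ∀ a b, (G.deleteEdges (↑F : Set (Sym2 (Fin n)))).Adj a b → σ a b = η a * η b := by
      intro a b hab
      rw [SimpleGraph.deleteEdges_adj] at hab
      obtain ⟨h1, h2⟩ := hab
      have hmem : s(a,b) ∈ G.edgeFinset := by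
        rw [SimpleGraph.mem_edgeFinset, SimpleGraph.mem_edgeSet]; exact h1
      have hmem' : s(a,b) ∈ G'.edgeFinset := by
        by_contra hc
        exact h2 (by
          rw [hFdef]
          exact Finset.mem_coe.mpr (Finset.mem_sdiff.mpr ⟨hmem, hc⟩))
      have hadj' : G'.Adj a b := by
        rw [SimpleGraph.mem_edgeFinset, SimpleGraph.mem_edgeSet] at hmem'; exact hmem'
      have hg := hadj'.2
      calc σ a b = σ a b * ((η a * η a) * (η b * η b)) := by rw [hη2 a, hη2 b]; ring
      _ = (σ a b * (η a * η b)) * (η a * η b) := by ring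
      _ = η a * η b := by rw [hg]; ring
    rw [walkSign_telescope σ η hη2 hloc w]
    exact hη2 u
  have hmemF : F.card ∈ FrustrationSet G σ := by
    refine ⟨F, ?_, hbal, rfl⟩
    intro e he
    have : e ∈ G.edgeFinset := (Finset.sdiff_subset) (Finset.mem_coe.mp he)
    exact SimpleGraph.mem_edgeFinset.mp this
  have hεF : ε ≤ F.card := hε.2 hmemF
  have hTle : T ≤ 2 * ((G.edgeFinset.card : ℝ) - ε) := by
    rw [hT2]
    have hn : ε + G'.edgeFinset.card ≤ G.edgeFinset.card := by omega
    have hc : (ε : ℝ) + (G'.edgeFinset.card : ℝ) ≤ (G.edgeFinset.card : ℝ) := by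
      exact_mod_cast hn
    linarith
  have hfin : S ^ 2 + S ≤ 2 * ((G.edgeFinset.card : ℝ) - ε) := hmain.trans hTle
  have hS0 : 0 ≤ S := by
    refine Finset.sum_nonneg fun a _ => Finset.sum_nonneg fun b _ => ?_
    exact mul_nonneg (hB0 a b) (mul_nonneg (hy0 a) (hy0 b))
  have hS2 : (0:ℝ) ≤ S ^ 2 := sq_nonneg S
  have hR0 : (0:ℝ) ≤ 2 * ((G.edgeFinset.card : ℝ) - ε) + 1/4 := by linarith
  have hexp : (S + 1/2) ^ 2 = S ^ 2 + S + 1/4 := by ring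
  have hsq : (S + 1/2) ^ 2 ≤ 2 * ((G.edgeFinset.card : ℝ) - ε) + 1/4 := by
    rw [hexp]; linarith
  have h5 : S + 1/2 ≤ Real.sqrt (2 * ((G.edgeFinset.card : ℝ) - ε) + 1/4) :=
    (Real.le_sqrt (by linarith) hR0).mpr hsq
  linarith
end

section
/- (Motzkin–Straus theorem for signed graphs) Let Σ = (G, σ) be a signed graph on n vertices with balanced clique number ω_b(Σ). Then the MS-index of Σ satisfies μ(Σ) = (1/2)·(ω_b(Σ) − 1)/ω_b(Σ). -/
open Matrix Finset

/-- The set of values of the quadratic form `xᵀ A(Σ) x / 2` over vectors `x`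
with `∑ᵢ |xᵢ| = 1`; the MS-index is its greatest element. -/
def MSSet {n : ℕ} (G : SimpleGraph (Fin n)) [DecidableRel G.Adj]
    (σ : Fin n → Fin n → ℝ) : Set ℝ :=
  {y | ∃ x : Fin n → ℝ, (∑ i, |x i|) = 1 ∧ y = x ⬝ᵥ (signedAdj G σ) *ᵥ x / 2}


open SimpleGraph

lemma list_pm_prod : ∀ l : List ℝ, (∀ x ∈ l, x = 1 ∨ x = -1) → l.prod = 1 ∨ l.prod = -1 := by
  intro l hl
  induction l with
  | nil => simp
  | cons a t ih =>
    rcases hl a (by simp) with h | h <;>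
      rcases ih (fun x hx => hl x (by simp [hx])) with h2 | h2 <;> simp [h, h2]

lemma closed_walk_eps_prod {V : Type*} {G : SimpleGraph V} (f : V → ℝ)
    (hf : ∀ v, f v = 1 ∨ f v = -1) {u : V} (w : G.Walk u u) :
    (w.darts.map fun d => f d.toProd.1 * f d.toProd.2).prod = 1 := by
  have h1 : (w.darts.map fun d => f d.toProd.1 * f d.toProd.2).prod
      = (w.darts.map fun d => f d.toProd.1).prod * (w.darts.map fun d => f d.toProd.2).prod := by
    rw [← List.prod_map_mul]
  have hfst : (w.darts.map fun d => f d.toProd.1).prod = ((w.support.dropLast).map f).prod := by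
    rw [← Walk.map_fst_darts, List.map_map]; rfl
  have hsnd : (w.darts.map fun d => f d.toProd.2).prod = ((w.support.tail).map f).prod := by
    rw [← Walk.map_snd_darts, List.map_map]; rfl
  have hne : w.support ≠ [] := w.support_ne_nil
  -- support = dropLast ++ [u] and support = u :: tail
  have hlast : w.support.getLast hne = u := w.getLast_support
  have hdl : w.support.dropLast ++ [u] = w.support := by
    conv_rhs => rw [← List.dropLast_append_getLast hne]
    rw [hlast]
  have hcons : w.support = u :: w.support.tail := w.support_eq_cons
  have hprod1 : (w.support.map f).prod = ((w.support.dropLast).map f).prod * f u := by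
    conv_lhs => rw [← hdl]
    rw [List.map_append, List.prod_append, List.map_singleton, List.prod_singleton]
  have hprod2 : (w.support.map f).prod = f u * ((w.support.tail).map f).prod := by
    conv_lhs => rw [hcons]
    rw [List.map_cons, List.prod_cons]
  have hfu : f u ≠ 0 := by rcases hf u with h | h <;> rw [h] <;> norm_num
  have heq : ((w.support.dropLast).map f).prod = ((w.support.tail).map f).prod := by
    have h2 := hprod1.symm.trans hprod2
    rw [mul_comm] at h2
    exact mul_left_cancel₀ hfu h2
  rw [h1, hfst, hsnd, heq]
  rcases list_pm_prod ((w.support.tail).map f)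
    (by intro x hx; obtain ⟨v, _, rfl⟩ := List.mem_map.mp hx; exact hf v) with h | h <;>
    rw [h] <;> norm_num

lemma triangle_isCycle {V : Type*} {G : SimpleGraph V} {a b c : V}
    (hab : G.Adj a b) (hbc : G.Adj b c) (hca : G.Adj c a) :
    (Walk.cons hab (Walk.cons hbc (Walk.cons hca Walk.nil))).IsCycle := by
  have h1 : a ≠ b := hab.ne
  have h2 : b ≠ c := hbc.ne
  have h3 : c ≠ a := hca.ne
  rw [Walk.isCycle_def]
  refine ⟨?_, by simp, ?_⟩
  · rw [Walk.isTrail_def]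
    simp [Sym2.eq, Sym2.rel_iff', h1, h2, h3, h1.symm, h2.symm, h3.symm]
  · simp [h2, h3, h1.symm, h2.symm, h3.symm]

lemma triangle_support {V : Type*} {G : SimpleGraph V} {a b c : V}
    (hab : G.Adj a b) (hbc : G.Adj b c) (hca : G.Adj c a) :
    (Walk.cons hab (Walk.cons hbc (Walk.cons hca Walk.nil))).support = [a, b, c, a] := by
  simp

lemma triangle_sign {V : Type*} {G : SimpleGraph V} (σ : V → V → ℝ) {a b c : V}
    (hab : G.Adj a b) (hbc : G.Adj b c) (hca : G.Adj c a) :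
    walkSign σ (Walk.cons hab (Walk.cons hbc (Walk.cons hca Walk.nil)))
      = σ a b * (σ b c * σ c a) := by
  simp [walkSign]

lemma ms_aux {n : ℕ} (H : SimpleGraph (Fin n)) [DecidableRel H.Adj] (ω : ℕ) (hω : 1 ≤ ω)
    (hcl : ∀ S : Finset (Fin n), H.IsClique (S : Set (Fin n)) → S.card ≤ ω) :
    ∀ k : ℕ, ∀ y : Fin n → ℝ, (∀ i, 0 ≤ y i) → (∑ i, y i) = 1 →
      (univ.filter fun i => y i ≠ 0).card ≤ k →
      (∑ i, ∑ j, (if H.Adj i j then (1:ℝ) else 0) * y i * y j) ≤ ((ω:ℝ) - 1)/ω := by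
  have hA0 : ∀ k : Fin n, (if H.Adj k k then (1:ℝ) else 0) = 0 := by
    intro k; simp
  have hAsymm : ∀ k l : Fin n, (if H.Adj k l then (1:ℝ) else 0)
      = (if H.Adj l k then (1:ℝ) else 0) := by
    intro k l; simp [adj_comm]
  intro k
  induction k with
  | zero =>
    intro y hy hs hcard
    exfalso
    have : ∀ i, y i = 0 := by
      intro i
      by_contra h
      have hi : i ∈ univ.filter fun i => y i ≠ 0 := by simp [h]
      have := Finset.card_pos.mpr ⟨i, hi⟩
      omega
    simp [this] at hs
  | succ k ih =>
    intro y hy hs hcard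
    set s : Finset (Fin n) := univ.filter fun i => y i ≠ 0 with hsdef
    have hzero : ∀ i, i ∉ s → y i = 0 := by
      intro i hi
      by_contra h
      exact hi (by simp [hsdef, h])
    have hsum_s : ∑ i ∈ s, y i = 1 := by
      rw [← hs]
      exact Finset.sum_subset (Finset.subset_univ s) (fun i _ hi => hzero i hi)
    by_cases hclq : H.IsClique (s : Set (Fin n))
    · -- clique case
      have hQs : (∑ i, ∑ j, (if H.Adj i j then (1:ℝ) else 0) * y i * y j)
          = ∑ i ∈ s, ∑ j ∈ s, (if H.Adj i j then (1:ℝ) else 0) * y i * y j := by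
        rw [← Finset.sum_subset (Finset.subset_univ s)
          (fun i _ hi => by simp [hzero i hi])]
        exact Finset.sum_congr rfl fun i _ =>
          (Finset.sum_subset (Finset.subset_univ s)
            (fun j _ hj => by simp [hzero j hj])).symm
      have hpt : ∀ i ∈ s, ∀ j ∈ s, (if H.Adj i j then (1:ℝ) else 0) * y i * y j
          = y i * y j - (if i = j then y i * y j else 0) := by
        intro i hi j hj
        by_cases hij : i = j
        · subst hij; simp
        · have : H.Adj i j := hclq (by simpa using hi) (by simpa using hj) hij
          simp [this, hij]
      have hQ2 : (∑ i ∈ s, ∑ j ∈ s, (if H.Adj i j then (1:ℝ) else 0) * y i * y j)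
          = 1 - ∑ i ∈ s, y i ^ 2 := by
        rw [Finset.sum_congr rfl fun i hi => Finset.sum_congr rfl fun j hj => hpt i hi j hj]
        have : ∀ i ∈ s, ∑ j ∈ s, (y i * y j - (if i = j then y i * y j else 0))
            = y i * (∑ j ∈ s, y j) - y i ^ 2 := by
          intro i hi
          rw [Finset.sum_sub_distrib, ← Finset.mul_sum]
          congr 1
          rw [Finset.sum_ite_eq s i (fun j => y i * y j), if_pos hi]
          ring
        rw [Finset.sum_congr rfl this, Finset.sum_sub_distrib, ← Finset.sum_mul, hsum_s]
        simp [hsum_s]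
      have hsne : s.Nonempty := by
        by_contra h
        rw [Finset.not_nonempty_iff_eq_empty] at h
        rw [h] at hsum_s
        simp at hsum_s
      have hcards : s.card ≤ ω := hcl s hclq
      have hcpos : (0:ℝ) < (s.card : ℝ) := by
        exact_mod_cast Finset.card_pos.mpr hsne
      have hωpos : (0:ℝ) < (ω:ℝ) := by exact_mod_cast hω
      have hcs : (1:ℝ) ≤ (s.card : ℝ) * ∑ i ∈ s, y i ^ 2 := by
        have := sq_sum_le_card_mul_sum_sq (s := s) (f := y)
        rw [hsum_s] at this
        simpa using this
      have h1 : (1:ℝ) / (s.card : ℝ) ≤ ∑ i ∈ s, y i ^ 2 := by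
        rw [div_le_iff₀ hcpos] at *
        nlinarith
      have h2 : (1:ℝ) / (ω:ℝ) ≤ 1 / (s.card : ℝ) := by
        apply one_div_le_one_div_of_le hcpos
        exact_mod_cast hcards
      rw [hQs, hQ2]
      have : ((ω:ℝ) - 1)/ω = 1 - 1/ω := by field_simp
      rw [this]
      linarith
    · -- non-clique case
      rw [SimpleGraph.isClique_iff, Set.Pairwise] at hclq
      push_neg at hclq
      obtain ⟨i, hi, j, hj, hij, hnadj⟩ := hclq
      rw [Finset.mem_coe] at hi hj
      -- reduce to the case N j ≤ N i
      have key : ∀ i j : Fin n, i ∈ s → j ∈ s → i ≠ j → ¬H.Adj i j →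
          (∑ l, (if H.Adj j l then (1:ℝ) else 0) * y l)
            ≤ (∑ l, (if H.Adj i l then (1:ℝ) else 0) * y l) →
          (∑ i, ∑ j, (if H.Adj i j then (1:ℝ) else 0) * y i * y j) ≤ ((ω:ℝ) - 1)/ω := by
        clear hi hj hij hnadj i j
        intro i j hi hj hij hnadj hN
        set A : Fin n → Fin n → ℝ := fun k l => if H.Adj k l then 1 else 0 with hAdef
        set d : Fin n → ℝ := fun k => (if k = i then y j else 0) - (if k = j then y j else 0)
          with hddef
        set y' : Fin n → ℝ := fun k => y k + d k with hy'def
        have hdi : d i = y j := by simp [hddef, hij]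
        have hdj : d j = - y j := by simp [hddef, Ne.symm hij]
        have hdo : ∀ l, l ≠ i → l ≠ j → d l = 0 := by
          intro l h1 h2; simp [hddef, h1, h2]
        have hyj : 0 < y j := by
          rw [hsdef, Finset.mem_filter] at hj
          exact lt_of_le_of_ne (hy j) (Ne.symm hj.2)
        have hy' : ∀ l, 0 ≤ y' l := by
          intro l
          by_cases h1 : l = i
          · subst h1; rw [hy'def]; simp only [hdi]; have := hy l; linarith
          · by_cases h2 : l = j
            · subst h2; rw [hy'def]; simp only [hdj]; linarith
            · rw [hy'def]; simp only [hdo l h1 h2]; simpa using hy l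
        have hsumd : ∑ l, d l = 0 := by
          simp [hddef, Finset.sum_sub_distrib, Finset.sum_ite_eq']
        have hs' : ∑ l, y' l = 1 := by
          rw [hy'def]
          simp only []
          rw [Finset.sum_add_distrib, hs, hsumd, add_zero]
        have hy'j : y' j = 0 := by rw [hy'def]; simp [hdj]
        have hsub : (univ.filter fun l => y' l ≠ 0) ⊆ s.erase j := by
          intro l hl
          rw [Finset.mem_filter] at hl
          rw [Finset.mem_erase]
          constructor
          · rintro rfl; exact hl.2 hy'j
          · by_cases h1 : l = i
            · subst h1; exact hi
            · have h2 : l ≠ j := by rintro rfl; exact hl.2 hy'j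
              rw [hsdef, Finset.mem_filter]
              refine ⟨Finset.mem_univ l, ?_⟩
              intro h0
              apply hl.2
              rw [hy'def]; simp [hdo l h1 h2, h0]
        have hcard' : (univ.filter fun l => y' l ≠ 0).card ≤ k := by
          have h1 := Finset.card_le_card hsub
          have h2 : (s.erase j).card = s.card - 1 := Finset.card_erase_of_mem hj
          have h3 : 1 ≤ s.card := Finset.card_pos.mpr ⟨j, hj⟩
          omega
        -- the quadratic form increases
        have hcol : ∀ f : Fin n → ℝ, (∑ l, f l * d l) = f i * y j - f j * y j := by
          intro f
          simp [hddef, mul_sub, Finset.sum_sub_distrib, mul_ite, mul_zero,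
            Finset.sum_ite_eq']
        have hcol2 : ∀ (g : Fin n → ℝ) (c : ℝ), (∑ l, g l * d l * c)
            = (g i * y j - g j * y j) * c := by
          intro g c
          rw [← Finset.sum_mul, hcol g]
        set N : Fin n → ℝ := fun v => ∑ l, A v l * y l with hNdef
        have expand : ∀ k l : Fin n, A k l * y' k * y' l
            = A k l * y k * y l + (A k l * y k * d l + (A k l * d k * y l + A k l * d k * d l)) := by
          intro k l
          rw [hy'def]
          ring
        have hT2 : (∑ k, ∑ l, A k l * y k * d l) = y j * N i - y j * N j := by
          have h1 : ∀ k : Fin n, (∑ l, A k l * y k * d l) = A k i * y k * y j - A k j * y k * y j :=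
            fun k => hcol (fun l => A k l * y k)
          rw [Finset.sum_congr rfl fun k _ => h1 k, Finset.sum_sub_distrib]
          rw [hNdef]
          simp only []
          rw [Finset.mul_sum, Finset.mul_sum]
          congr 1 <;> apply Finset.sum_congr rfl <;> intro k _ <;>
            rw [hAdef] <;> simp only [] <;> rw [hAsymm] <;> ring
        have hT3 : (∑ k, ∑ l, A k l * d k * y l) = y j * N i - y j * N j := by
          rw [Finset.sum_comm]
          have h1 : ∀ l : Fin n, (∑ k, A k l * d k * y l)
              = (A i l * y j - A j l * y j) * y l :=
            fun l => hcol2 (fun k => A k l) (y l)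
          rw [Finset.sum_congr rfl fun l _ => h1 l]
          have h2 : ∀ l : Fin n, (A i l * y j - A j l * y j) * y l
              = y j * (A i l * y l) - y j * (A j l * y l) := by intro l; ring
          rw [Finset.sum_congr rfl fun l _ => h2 l, Finset.sum_sub_distrib]
          rw [hNdef]
          simp only []
          rw [Finset.mul_sum, Finset.mul_sum]
        have hT4 : (∑ k, ∑ l, A k l * d k * d l) = 0 := by
          have h1 : ∀ k : Fin n, (∑ l, A k l * d k * d l)
              = A k i * d k * y j - A k j * d k * y j :=
            fun k => hcol (fun l => A k l * d k)
          rw [Finset.sum_congr rfl fun k _ => h1 k, Finset.sum_sub_distrib]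
          rw [hcol2 (fun k => A k i) (y j), hcol2 (fun k => A k j) (y j)]
          have hAii : A i i = 0 := hA0 i
          have hAjj : A j j = 0 := hA0 j
          have hAij : A i j = 0 := by rw [hAdef]; simp [hnadj]
          have hAji : A j i = 0 := by
            rw [hAdef]; simp only []; rw [hAsymm]; simp [hnadj]
          rw [hAii, hAjj, hAij, hAji]
          ring
        have hQexp : (∑ k, ∑ l, A k l * y' k * y' l)
            = (∑ k, ∑ l, A k l * y k * y l) + 2 * (y j * N i - y j * N j) := by
          calc (∑ k, ∑ l, A k l * y' k * y' l)
              = ∑ k, ∑ l, (A k l * y k * y l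
                + (A k l * y k * d l + (A k l * d k * y l + A k l * d k * d l))) := by
                apply Finset.sum_congr rfl; intro k _
                apply Finset.sum_congr rfl; intro l _
                exact expand k l
            _ = (∑ k, ∑ l, A k l * y k * y l) + ((∑ k, ∑ l, A k l * y k * d l)
                + ((∑ k, ∑ l, A k l * d k * y l) + (∑ k, ∑ l, A k l * d k * d l))) := by
                simp [Finset.sum_add_distrib]
            _ = (∑ k, ∑ l, A k l * y k * y l) + 2 * (y j * N i - y j * N j) := by
                rw [hT2, hT3, hT4]; ring
        have hNle : y j * N j ≤ y j * N i := by
          apply mul_le_mul_of_nonneg_left _ (le_of_lt hyj)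
          exact hN
        have hmono : (∑ k, ∑ l, A k l * y k * y l) ≤ (∑ k, ∑ l, A k l * y' k * y' l) := by
          rw [hQexp]; linarith
        calc (∑ k, ∑ l, A k l * y k * y l) ≤ (∑ k, ∑ l, A k l * y' k * y' l) := hmono
          _ ≤ ((ω:ℝ) - 1)/ω := ih y' hy' hs' hcard'
      rcases le_total (∑ l, (if H.Adj j l then (1:ℝ) else 0) * y l)
          (∑ l, (if H.Adj i l then (1:ℝ) else 0) * y l) with h | h
      · exact key i j hi hj hij hnadj h
      · exact key j i hj hi (Ne.symm hij) (fun h' => hnadj h'.symm) h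

lemma dot_expand {n : ℕ} (M : Matrix (Fin n) (Fin n) ℝ) (x : Fin n → ℝ) :
    x ⬝ᵥ M *ᵥ x = ∑ i, ∑ j, M i j * x i * x j := by
  rw [dotProduct]
  apply Finset.sum_congr rfl; intro i _
  rw [mulVec, dotProduct, Finset.mul_sum]
  apply Finset.sum_congr rfl; intro j _
  ring

/-- Motzkin–Straus for signed graphs:
`μ(Σ) = (1/2)·(ω_b(Σ) - 1)/ω_b(Σ)`. -/
theorem stmt_10 {n : ℕ} (G : SimpleGraph (Fin n)) [DecidableRel G.Adj]
    (σ : Fin n → Fin n → ℝ) (hσ : IsSignFn G σ)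
    (μ : ℝ) (hμ : IsGreatest (MSSet G σ) μ)
    (ωb : ℕ) (hω : IsGreatest (BalancedCliqueSet G σ) ωb) :
    μ = (1 / 2 : ℝ) * (((ωb : ℝ) - 1) / ωb) := by
  classical
  obtain ⟨⟨x, hx1, hxQ⟩, hub⟩ := hμ
  -- n is positive
  have hn : 0 < n := by
    rcases Nat.eq_zero_or_pos n with h | h
    · exfalso; subst h; simp at hx1
    · exact h
  -- ωb ≥ 1
  have hω1 : 1 ≤ ωb := by
    set v0 : Fin n := ⟨0, hn⟩
    apply hω.2
    refine ⟨{v0}, ⟨?_, ?_⟩, Finset.card_singleton v0⟩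
    · simp [SimpleGraph.isClique_iff, Set.Pairwise]
    · intro u w hw hsup
      exfalso
      have hd : w.darts ≠ [] := by
        intro h
        have h1 := hw.three_le_length
        have h2 := w.length_darts
        rw [h] at h2
        simp at h2
        omega
      obtain ⟨d, hdmem⟩ := List.exists_mem_of_ne_nil w.darts hd
      have h1 : d.fst ∈ w.support := Walk.dart_fst_mem_support_of_mem_darts w hdmem
      have h2 : d.snd ∈ w.support := Walk.dart_snd_mem_support_of_mem_darts w hdmem
      have e1 := hsup _ h1
      have e2 := hsup _ h2
      simp only [Finset.mem_singleton] at e1 e2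
      have hadj := d.adj
      rw [show d.fst = d.toProd.1 from rfl] at e1
      rw [show d.snd = d.toProd.2 from rfl] at e2
      rw [e1, e2] at hadj
      exact G.irrefl hadj
  have hωpos : (0:ℝ) < (ωb:ℝ) := by exact_mod_cast hω1
  -- LOWER BOUND -----------------------------------------------------------
  obtain ⟨S, hS, hcardS⟩ := hω.1
  have hSne : S.Nonempty := Finset.card_pos.mp (by omega)
  obtain ⟨v0, hv0⟩ := hSne
  set η : Fin n → ℝ := fun u => if u = v0 then 1 else if u ∈ S then σ v0 u else 1 with hηdef
  have hmemS : ∀ u ∈ S, u ≠ v0 → G.Adj v0 u := by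
    intro u hu hne
    exact hS.1 (Finset.mem_coe.mpr hv0) (Finset.mem_coe.mpr hu) (Ne.symm hne)
  have hηpm : ∀ u, η u = 1 ∨ η u = -1 := by
    intro u
    rw [hηdef]
    by_cases h1 : u = v0
    · simp [h1]
    · by_cases h2 : u ∈ S
      · simp only [h1, if_false, h2, if_true]
        exact hσ.2 v0 u (hmemS u h2 h1)
      · simp [h1, h2]
  have key : ∀ i ∈ S, ∀ j ∈ S, i ≠ j → σ i j * η i * η j = 1 := by
    intro i hi j hj hij
    by_cases h1 : i = v0
    · have hj' : j ≠ v0 := by rw [← h1]; exact Ne.symm hij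
      have hηi : η i = 1 := by rw [hηdef]; simp [h1]
      have hηj : η j = σ v0 j := by rw [hηdef]; simp [hj', hj]
      have hpm := hσ.2 i j (hS.1 (Finset.mem_coe.mpr hi) (Finset.mem_coe.mpr hj) hij)
      rw [hηi, hηj, h1]
      rcases hpm with h | h <;> rw [h1] at h <;> rw [h] <;> norm_num
    · by_cases h2 : j = v0
      · have hηj : η j = 1 := by rw [hηdef]; simp [h2]
        have hηi : η i = σ v0 i := by rw [hηdef]; simp [h1, hi]
        have hsym : σ i j = σ v0 i := by rw [← h2]; exact hσ.1 i j
        have hpm := hσ.2 i j (hS.1 (Finset.mem_coe.mpr hi) (Finset.mem_coe.mpr hj) hij)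
        rw [hηi, hηj, ← hsym]
        rcases hpm with h | h <;> rw [h] <;> norm_num
      · -- triangle case
        have hadj1 : G.Adj v0 i := hmemS i hi h1
        have hadj2 : G.Adj i j := hS.1 (Finset.mem_coe.mpr hi) (Finset.mem_coe.mpr hj) hij
        have hadj3 : G.Adj j v0 := (hmemS j hj h2).symm
        have htri := hS.2 v0 (Walk.cons hadj1 (Walk.cons hadj2 (Walk.cons hadj3 Walk.nil)))
          (triangle_isCycle hadj1 hadj2 hadj3)
          (by
            rw [triangle_support hadj1 hadj2 hadj3]
            intro v hv
            simp only [List.mem_cons, List.not_mem_nil, or_false] at hv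
            rcases hv with rfl | rfl | rfl | rfl
            · exact hv0
            · exact hi
            · exact hj
            · exact hv0)
        rw [triangle_sign σ hadj1 hadj2 hadj3] at htri
        have hηi : η i = σ v0 i := by rw [hηdef]; simp [h1, hi]
        have hηj : η j = σ v0 j := by rw [hηdef]; simp [h2, hj]
        have hsym : σ j v0 = σ v0 j := hσ.1 j v0
        rw [hηi, hηj]
        rw [hsym] at htri
        linarith [htri]
  -- the witness vector
  set xl : Fin n → ℝ := fun i => if i ∈ S then η i / (ωb:ℝ) else 0 with hxldef
  have hxlabs : (∑ i, |xl i|) = 1 := by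
    have h1 : ∀ i, |xl i| = if i ∈ S then 1/(ωb:ℝ) else 0 := by
      intro i
      rw [hxldef]
      by_cases h : i ∈ S
      · simp only [h, if_true]
        rw [abs_div]
        rcases hηpm i with h2 | h2 <;> rw [h2] <;>
          simp [abs_of_pos hωpos]
      · simp [h]
    rw [Finset.sum_congr rfl fun i _ => h1 i]
    rw [Finset.sum_ite_mem, Finset.univ_inter, Finset.sum_const, hcardS]
    rw [nsmul_eq_mul]
    field_simp
  have hxlQ : (∑ i, ∑ j, signedAdj G σ i j * xl i * xl j) = ((ωb:ℝ) - 1)/ωb := by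
    have hz : ∀ i, i ∉ S → xl i = 0 := by intro i hi; rw [hxldef]; simp [hi]
    have hQs : (∑ i, ∑ j, signedAdj G σ i j * xl i * xl j)
        = ∑ i ∈ S, ∑ j ∈ S, signedAdj G σ i j * xl i * xl j := by
      rw [← Finset.sum_subset (Finset.subset_univ S)
        (fun i _ hi => by simp [hz i hi])]
      exact Finset.sum_congr rfl fun i _ =>
        (Finset.sum_subset (Finset.subset_univ S)
          (fun j _ hj => by simp [hz j hj])).symm
    have hpt : ∀ i ∈ S, ∀ j ∈ S, signedAdj G σ i j * xl i * xl j
        = 1/((ωb:ℝ)*ωb) - (if i = j then 1/((ωb:ℝ)*ωb) else 0) := by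
      intro i hi j hj
      by_cases hij : i = j
      · subst hij
        simp [signedAdj]
      · have hadj : G.Adj i j := hS.1 (Finset.mem_coe.mpr hi) (Finset.mem_coe.mpr hj) hij
        have hk := key i hi j hj hij
        rw [hxldef]
        simp only [signedAdj, if_pos hadj, if_pos hi, if_pos hj, if_neg hij, sub_zero]
        field_simp
        linarith [hk]
    rw [hQs, Finset.sum_congr rfl fun i hi => Finset.sum_congr rfl fun j hj => hpt i hi j hj]
    have hinner : ∀ i ∈ S, ∑ j ∈ S, (1/((ωb:ℝ)*ωb) - (if i = j then 1/((ωb:ℝ)*ωb) else 0))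
        = (S.card : ℝ)/((ωb:ℝ)*ωb) - 1/((ωb:ℝ)*ωb) := by
      intro i hi
      rw [Finset.sum_sub_distrib, Finset.sum_const, Finset.sum_ite_eq S i, if_pos hi]
      rw [nsmul_eq_mul]
      ring
    rw [Finset.sum_congr rfl hinner, Finset.sum_const, hcardS, nsmul_eq_mul]
    have hne : (ωb:ℝ) ≠ 0 := ne_of_gt hωpos
    field_simp
  have hlow : (1 / 2 : ℝ) * (((ωb : ℝ) - 1) / ωb) ≤ μ := by
    have hmem : (1 / 2 : ℝ) * (((ωb : ℝ) - 1) / ωb) ∈ MSSet G σ := by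
      refine ⟨xl, hxlabs, ?_⟩
      rw [dot_expand, hxlQ]
      ring
    exact hub hmem
  -- UPPER BOUND -----------------------------------------------------------
  set ε : Fin n → ℝ := fun i => if x i < 0 then -1 else 1 with hεdef
  set yv : Fin n → ℝ := fun i => |x i| with hyvdef
  have hεpm : ∀ i, ε i = 1 ∨ ε i = -1 := by
    intro i; rw [hεdef]; by_cases h : x i < 0 <;> simp [h]
  have hεsq : ∀ i, ε i * ε i = 1 := by
    intro i; rcases hεpm i with h | h <;> rw [h] <;> norm_num
  have hxe : ∀ i, x i = ε i * yv i := by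
    intro i
    rw [hεdef, hyvdef]
    by_cases h : x i < 0
    · simp [h, abs_of_neg h]
    · simp [h, abs_of_nonneg (not_lt.mp h)]
  set Gp : SimpleGraph (Fin n) :=
    { Adj := fun i j => G.Adj i j ∧ σ i j * ε i * ε j = 1,
      symm := by
        constructor
        intro a b ⟨h1, h2⟩
        refine ⟨h1.symm, ?_⟩
        rw [hσ.1 b a]
        linarith [h2]
      loopless := ⟨fun a h => G.irrefl h.1⟩ } with hGpdef
  have hGpAdj : ∀ i j, Gp.Adj i j ↔ (G.Adj i j ∧ σ i j * ε i * ε j = 1) := by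
    intro i j; rw [hGpdef]
  have hclGp : ∀ T : Finset (Fin n), Gp.IsClique (T : Set (Fin n)) → T.card ≤ ωb := by
    intro T hT
    apply hω.2
    refine ⟨T, ⟨?_, ?_⟩, rfl⟩
    · intro a ha b hb hne
      exact ((hGpAdj a b).mp (hT ha hb hne)).1
    · intro u w hw hsup
      rw [walkSign]
      have hmapeq : (w.darts.map fun d => σ d.toProd.1 d.toProd.2)
          = w.darts.map fun d => ε d.toProd.1 * ε d.toProd.2 := by
        apply List.map_congr_left
        intro d hd
        have h1 : d.toProd.1 ∈ w.support := Walk.dart_fst_mem_support_of_mem_darts w hd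
        have h2 : d.toProd.2 ∈ w.support := Walk.dart_snd_mem_support_of_mem_darts w hd
        have hadj : G.Adj d.toProd.1 d.toProd.2 := d.adj
        have hp : Gp.Adj d.toProd.1 d.toProd.2 :=
          hT (Finset.mem_coe.mpr (hsup _ h1)) (Finset.mem_coe.mpr (hsup _ h2)) hadj.ne
        have h3 := ((hGpAdj _ _).mp hp).2
        set a := d.toProd.1
        set b := d.toProd.2
        calc σ a b = σ a b * (ε a * ε a) * (ε b * ε b) := by
              rw [hεsq a, hεsq b]; ring
          _ = (σ a b * ε a * ε b) * (ε a * ε b) := by ring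
          _ = ε a * ε b := by rw [h3]; ring
      rw [hmapeq]
      exact closed_walk_eps_prod ε hεpm w
  have hyv1 : (∑ i, yv i) = 1 := hx1
  have hkey : (∑ i, ∑ j, signedAdj G σ i j * x i * x j)
      ≤ (∑ i, ∑ j, (if Gp.Adj i j then (1:ℝ) else 0) * yv i * yv j) := by
    apply Finset.sum_le_sum
    intro i _
    apply Finset.sum_le_sum
    intro j _
    by_cases hp : Gp.Adj i j
    · obtain ⟨hg, he⟩ := (hGpAdj i j).mp hp
      rw [if_pos hp]
      rw [show signedAdj G σ i j = σ i j from if_pos hg]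
      rw [hxe i, hxe j]
      have : σ i j * (ε i * yv i) * (ε j * yv j) = (σ i j * ε i * ε j) * (yv i * yv j) := by ring
      rw [this, he]
      apply le_of_eq
      ring
    · rw [if_neg hp, zero_mul, zero_mul]
      by_cases hg : G.Adj i j
      · have hne1 : σ i j * ε i * ε j ≠ 1 := by
          intro h
          exact hp ((hGpAdj i j).mpr ⟨hg, h⟩)
        have hpm : σ i j * ε i * ε j = 1 ∨ σ i j * ε i * ε j = -1 := by
          rcases hσ.2 i j hg with h | h <;> rcases hεpm i with h1 | h1 <;>
            rcases hεpm j with h2 | h2 <;> rw [h, h1, h2] <;> norm_num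
        have hm1 : σ i j * ε i * ε j = -1 := by tauto
        rw [show signedAdj G σ i j = σ i j from if_pos hg]
        rw [hxe i, hxe j]
        have : σ i j * (ε i * yv i) * (ε j * yv j) = (σ i j * ε i * ε j) * (yv i * yv j) := by
          ring
        rw [this, hm1]
        have hy1 : 0 ≤ yv i := abs_nonneg _
        have hy2 : 0 ≤ yv j := abs_nonneg _
        nlinarith
      · rw [show signedAdj G σ i j = 0 from if_neg hg]
        simp
  have hup : μ ≤ (1 / 2 : ℝ) * (((ωb : ℝ) - 1) / ωb) := by
    have hms := ms_aux Gp ωb hω1 hclGp (univ.filter fun i => yv i ≠ 0).card yv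
      (fun i => abs_nonneg _) hyv1 le_rfl
    rw [hxQ, dot_expand]
    have := le_trans hkey hms
    linarith
  linarith
end

section
/- Let A be the symmetric 5×5 matrix with zero diagonal whose nonzero entries are a₁₂ = a₂₁ = −1 and a₂₃ = a₃₂ = a₃₄ = a₄₃ = a₄₅ = a₅₄ = a₁₅ = a₅₁ = 1 (the adjacency matrix of the 5-cycle with exactly one negative edge). If λ₁ ≥ λ₂ are the two largest eigenvalues of A, then λ₁² + λ₂² > 5. In particular, the inequality λ₁² + λ₂² ≤ m for triangle-free graphs with m edges fails for signed graphs. -/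
open Matrix Finset

/-- The adjacency matrix of the `5`-cycle with exactly one negative edge. -/
def A5 : Matrix (Fin 5) (Fin 5) ℝ :=
  !![0, -1, 0, 0, 1;
     -1, 0, 1, 0, 0;
     0, 1, 0, 1, 0;
     0, 0, 1, 0, 1;
     1, 0, 0, 1, 0]

lemma A5_sq : A5 * A5 = !![2,0,-1,1,0; 0,2,0,1,-1; -1,0,2,0,1; 1,1,0,2,0; 0,-1,1,0,2] := by
  ext i j
  fin_cases i <;> fin_cases j <;>
    norm_num [A5, Matrix.mul_apply, Fin.sum_univ_succ, Matrix.vecHead, Matrix.vecTail]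

lemma A5_cube : A5 * A5 * A5 =
    !![0,-3,1,-1,3; -3,0,3,-1,1; 1,3,0,3,-1; -1,-1,3,0,3; 3,1,-1,3,0] := by
  rw [A5_sq]
  ext i j
  fin_cases i <;> fin_cases j <;>
    norm_num [A5, Matrix.mul_apply, Fin.sum_univ_succ, Matrix.vecHead, Matrix.vecTail]

lemma A5_id : (A5 * A5 * A5) * (A5 * A5) - (5:ℝ) • (A5 * A5 * A5) + (5:ℝ) • A5
    + (2:ℝ) • (1 : Matrix (Fin 5) (Fin 5) ℝ) = 0 := by
  rw [A5_cube, A5_sq]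
  ext i j
  fin_cases i <;> fin_cases j <;>
    simp only [Matrix.sub_apply, Matrix.add_apply, Matrix.smul_apply, Matrix.mul_apply,
      Matrix.one_apply, Matrix.zero_apply, Fin.sum_univ_five, smul_eq_mul] <;>
    norm_num [A5, Matrix.vecHead, Matrix.vecTail, Fin.ext_iff, Matrix.cons_val_two, Matrix.cons_val_three, Matrix.cons_val_four]

lemma eig_cases (hA : A5.IsHermitian) (i : Fin 5) :
    hA.eigenvalues i = -2 ∨ hA.eigenvalues i = (1 + Real.sqrt 5) / 2 ∨
      hA.eigenvalues i = (1 - Real.sqrt 5) / 2 := by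
  set t := hA.eigenvalues i with ht
  set v : Fin 5 → ℝ := ⇑(hA.eigenvectorBasis i) with hv
  have p1 : A5 *ᵥ v = t • v := hA.mulVec_eigenvectorBasis i
  have p2 : (A5 * A5) *ᵥ v = (t * t) • v := by
    rw [← mulVec_mulVec, p1, mulVec_smul, p1, smul_smul]
  have p3 : (A5 * A5 * A5) *ᵥ v = (t * t * t) • v := by
    rw [← mulVec_mulVec, p1, mulVec_smul, p2, smul_smul, mul_comm]
  have p5 : ((A5 * A5 * A5) * (A5 * A5)) *ᵥ v = (t * t * (t * t * t)) • v := by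
    rw [← mulVec_mulVec, p2, mulVec_smul, p3, smul_smul]
  have key : (t*t*(t*t*t) - 5*(t*t*t) + 5*t + 2) • v = 0 := by
    have h0 := congrArg (fun M => M *ᵥ v) A5_id
    simp only [sub_mulVec, add_mulVec, smul_mulVec, one_mulVec, zero_mulVec,
      p5, p3, p1] at h0
    rw [← h0]
    module
  have hvne : v ≠ 0 := by
    intro h
    exact hA.eigenvectorBasis.orthonormal.ne_zero i (by ext k; exact congrFun h k)
  have hroot : t*t*(t*t*t) - 5*(t*t*t) + 5*t + 2 = 0 :=
    (smul_eq_zero.mp key).resolve_right hvne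
  have h5 : Real.sqrt 5 ^ 2 = 5 := Real.sq_sqrt (by norm_num)
  have hfac : (t + 2) * ((t - (1 + Real.sqrt 5)/2) * (t - (1 - Real.sqrt 5)/2))^2 = 0 := by
    linear_combination hroot + ((t+2) * (-(t^2-t-1)/2 + (Real.sqrt 5^2-5)/16)) * h5
  rcases mul_eq_zero.mp hfac with h | h
  · left; linarith
  rw [pow_eq_zero_iff (by norm_num)] at h
  rcases mul_eq_zero.mp h with h | h
  · right; left; linarith
  · right; right; linarith

lemma sum_eig_s13 (hA : A5.IsHermitian) : ∑ i, hA.eigenvalues i = 0 := by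
  have h1 : A5.trace = ∑ i, hA.eigenvalues i := by
    conv_lhs => rw [hA.spectral_theorem]
    rw [Unitary.conjStarAlgAut_apply, Matrix.trace_mul_cycle, Unitary.coe_star_mul_self, one_mul]
    simp [Matrix.trace_diagonal]
  have h2 : A5.trace = 0 := by
    norm_num [A5, Matrix.trace, Matrix.diag, Fin.sum_univ_succ]
  rw [← h1, h2]


set_option maxHeartbeats 2000000 in
/-- For the signed `5`-cycle with one negative edge,
`λ₁² + λ₂² > 5 = m`. -/
theorem stmt_13 (hA : A5.IsHermitian)
    (μ : Fin 5 → ℝ) (hmono : Antitone μ)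
    (hperm : ∃ e : Equiv.Perm (Fin 5), ∀ i, μ i = hA.eigenvalues (e i)) :
    μ 0 ^ 2 + μ 1 ^ 2 > 5 := by
  obtain ⟨e, he⟩ := hperm
  have h5 : Real.sqrt 5 ^ 2 = 5 := Real.sq_sqrt (by norm_num)
  have hs2 : 2 < Real.sqrt 5 := by nlinarith [Real.sqrt_nonneg 5]
  have hs3 : Real.sqrt 5 < 3 := by nlinarith [Real.sqrt_nonneg 5]
  have hsum : μ 0 + μ 1 + μ 2 + μ 3 + μ 4 = 0 := by
    have h2 : ∑ i, μ i = 0 := by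
      rw [Finset.sum_congr rfl (fun i _ => he i), Equiv.sum_comp e hA.eigenvalues, sum_eig_s13 hA]
    simpa [Fin.sum_univ_five] using h2
  have hc : ∀ i, μ i = -2 ∨ μ i = (1 + Real.sqrt 5)/2 ∨ μ i = (1 - Real.sqrt 5)/2 :=
    fun i => by rw [he i]; exact eig_cases hA (e i)
  have h01 : μ 1 ≤ μ 0 := hmono (by decide)
  have h12 : μ 2 ≤ μ 1 := hmono (by decide)
  have h23 : μ 3 ≤ μ 2 := hmono (by decide)
  have h34 : μ 4 ≤ μ 3 := hmono (by decide)
  rcases hc 0 with h0|h0|h0 <;> rcases hc 1 with h1|h1|h1 <;> rcases hc 2 with h2|h2|h2 <;>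
    rcases hc 3 with h3|h3|h3 <;> rcases hc 4 with h4|h4|h4 <;>
    simp only [h0, h1, h2, h3, h4] at hsum h01 h12 h23 h34 ⊢ <;>
    linarith only [h5, hs2, hs3, hsum, h01, h12, h23, h34]
end

section
/- Let G be a finite simple graph with m edges and t(G) triangles, and let λ₁(G) be the largest eigenvalue of its adjacency matrix. Then λ₁(G)² ≤ m + (6 t(G))^{2/3}. -/
open Matrix Finset

lemma conj_pow_eq {m : Type*} [Fintype m] [DecidableEq m] (U D : Matrix m m ℝ)
    (hU : star U * U = 1) (hU' : U * star U = 1) (k : ℕ) :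
    (U * D * star U) ^ k = U * D ^ k * star U := by
  induction k with
  | zero => simp [hU']
  | succ k ih =>
    rw [pow_succ, ih, pow_succ, Matrix.mul_assoc, Matrix.mul_assoc, Matrix.mul_assoc,
      ← Matrix.mul_assoc (star U), hU, Matrix.one_mul, ← Matrix.mul_assoc, ← Matrix.mul_assoc,
      Matrix.mul_assoc U]

lemma trace_pow_eq {n : ℕ} {A : Matrix (Fin n) (Fin n) ℝ} (hA : A.IsHermitian) (k : ℕ) :
    (A ^ k).trace = ∑ i, hA.eigenvalues i ^ k := by
  have h2 := hA.eigenvectorUnitary.2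
  have hU : (star (hA.eigenvectorUnitary : Matrix (Fin n) (Fin n) ℝ)) *
      (hA.eigenvectorUnitary : Matrix (Fin n) (Fin n) ℝ) = 1 :=
    (Matrix.mem_unitaryGroup_iff').mp h2
  have hU' : (hA.eigenvectorUnitary : Matrix (Fin n) (Fin n) ℝ) *
      (star (hA.eigenvectorUnitary : Matrix (Fin n) (Fin n) ℝ)) = 1 :=
    (Matrix.mem_unitaryGroup_iff).mp h2
  have hD : A = (hA.eigenvectorUnitary : Matrix (Fin n) (Fin n) ℝ) *
      Matrix.diagonal hA.eigenvalues * (star (hA.eigenvectorUnitary : Matrix (Fin n) (Fin n) ℝ)) := by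
    have := hA.spectral_theorem
    rwa [RCLike.ofReal_real_eq_id, Function.id_comp] at this
  have h3 := congrArg (fun M : Matrix (Fin n) (Fin n) ℝ => (M ^ k).trace) hD
  rw [h3, conj_pow_eq _ _ hU hU' k, Matrix.trace_mul_cycle, hU, Matrix.one_mul,
    Matrix.diagonal_pow, Matrix.trace_diagonal]
  simp [Pi.pow_apply]

example : True := trivial

lemma trace_sq {n : ℕ} (G : SimpleGraph (Fin n)) [DecidableRel G.Adj] :
    ((G.adjMatrix ℝ) ^ 2).trace = 2 * (G.edgeFinset.card : ℝ) := by
  have : ∀ i : Fin n, ((G.adjMatrix ℝ) ^ 2) i i = (G.degree i : ℝ) := by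
    intro i
    rw [sq]
    exact G.adjMatrix_mul_self_apply_self i
  rw [Matrix.trace]
  simp only [Matrix.diag_apply, this]
  rw [← Nat.cast_sum, SimpleGraph.sum_degrees_eq_twice_card_edges]
  push_cast; ring

lemma ite_sum_zero {α : Type*} {c : Prop} [Decidable c] {s : Finset α} (f : α → ℝ) :
    (if c then ∑ x ∈ s, f x else 0) = ∑ x ∈ s, if c then f x else 0 := by
  split_ifs <;> simp

lemma trace_cube {n : ℕ} (G : SimpleGraph (Fin n)) [DecidableRel G.Adj] :
    ((G.adjMatrix ℝ) ^ 3).trace =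
      ((univ.filter fun p : Fin n × Fin n × Fin n =>
        G.Adj p.1 p.2.1 ∧ G.Adj p.2.1 p.2.2 ∧ G.Adj p.2.2 p.1).card : ℝ) := by
  have h3 : (G.adjMatrix ℝ) ^ 3 = G.adjMatrix ℝ * G.adjMatrix ℝ * G.adjMatrix ℝ := by
    rw [pow_succ, pow_two]
  rw [Finset.card_filter]
  push_cast
  rw [Fintype.sum_prod_type]
  simp only [Fintype.sum_prod_type]
  rw [Matrix.trace, h3]
  simp only [Matrix.diag_apply, Matrix.mul_apply, SimpleGraph.adjMatrix_apply,
    Finset.sum_mul, Finset.mul_sum, ite_zero_mul, mul_ite, mul_one, mul_zero, zero_mul,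
    ite_and]
  refine Finset.sum_congr rfl fun i _ => ?_
  simp only [_root_.ite_sum_zero]
  conv_lhs => rw [Finset.sum_comm]
  refine Finset.sum_congr rfl fun j _ => ?_
  refine Finset.sum_congr rfl fun k _ => ?_
  split_ifs <;> tauto

set_option maxHeartbeats 1000000

lemma card_T {n : ℕ} (G : SimpleGraph (Fin n)) [DecidableRel G.Adj] :
    (univ.filter fun p : Fin n × Fin n × Fin n =>
      G.Adj p.1 p.2.1 ∧ G.Adj p.2.1 p.2.2 ∧ G.Adj p.2.2 p.1).card
      = 6 * (G.cliqueFinset 3).card := by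
  classical
  set T := univ.filter fun p : Fin n × Fin n × Fin n =>
      G.Adj p.1 p.2.1 ∧ G.Adj p.2.1 p.2.2 ∧ G.Adj p.2.2 p.1 with hT
  have hmap : ∀ p ∈ T, ({p.1, p.2.1, p.2.2} : Finset (Fin n)) ∈ G.cliqueFinset 3 := by
    rintro ⟨x, y, z⟩ hp
    simp only [hT, mem_filter] at hp
    obtain ⟨-, h1, h2, h3⟩ := hp
    rw [SimpleGraph.mem_cliqueFinset_iff]
    exact SimpleGraph.is3Clique_triple_iff.2 ⟨h1, h3.symm, h2⟩
  have hfibcard : ∀ s ∈ G.cliqueFinset 3,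
      (T.filter fun p => ({p.1, p.2.1, p.2.2} : Finset (Fin n)) = s).card = 6 := by
    intro s hs
    rw [SimpleGraph.mem_cliqueFinset_iff, SimpleGraph.is3Clique_iff] at hs
    obtain ⟨a, b, c, hab, hac, hbc, rfl⟩ := hs
    have hne1 : a ≠ b := hab.ne
    have hne2 : a ≠ c := hac.ne
    have hne3 : b ≠ c := hbc.ne
    have hfib : T.filter (fun p => ({p.1, p.2.1, p.2.2} : Finset (Fin n)) = {a, b, c})
        = ({(a,b,c),(a,c,b),(b,a,c),(b,c,a),(c,a,b),(c,b,a)} : Finset (Fin n × Fin n × Fin n)) := by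
      ext ⟨x, y, z⟩
      simp only [hT, mem_filter, mem_univ, true_and, mem_insert, mem_singleton, Prod.mk.injEq]
      constructor
      · rintro ⟨⟨h1, h2, h3⟩, hset⟩
        have hx : x = a ∨ x = b ∨ x = c := by
          have : x ∈ ({a,b,c} : Finset (Fin n)) := hset ▸ (by simp)
          simpa using this
        have hy : y = a ∨ y = b ∨ y = c := by
          have : y ∈ ({a,b,c} : Finset (Fin n)) := hset ▸ (by simp)
          simpa using this
        have hz : z = a ∨ z = b ∨ z = c := by
          have : z ∈ ({a,b,c} : Finset (Fin n)) := hset ▸ (by simp)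
          simpa using this
        have ha' : a ∈ ({x,y,z} : Finset (Fin n)) := hset ▸ (by simp)
        have hb' : b ∈ ({x,y,z} : Finset (Fin n)) := hset ▸ (by simp)
        have hc' : c ∈ ({x,y,z} : Finset (Fin n)) := hset ▸ (by simp)
        simp only [mem_insert, mem_singleton] at ha' hb' hc'
        have hxy : x ≠ y := h1.ne
        have hyz : y ≠ z := h2.ne
        have hzx : z ≠ x := h3.ne
        rcases hx with rfl | rfl | rfl <;> rcases hy with rfl | rfl | rfl <;>
          rcases hz with rfl | rfl | rfl <;>
          first
            | exact absurd rfl hxy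
            | exact absurd rfl hyz
            | exact absurd rfl hzx
            | tauto
      · have e1 : ({a,c,b} : Finset (Fin n)) = {a,b,c} := by ext w; simp; tauto
        have e2 : ({b,a,c} : Finset (Fin n)) = {a,b,c} := by ext w; simp; tauto
        have e3 : ({b,c,a} : Finset (Fin n)) = {a,b,c} := by ext w; simp; tauto
        have e4 : ({c,a,b} : Finset (Fin n)) = {a,b,c} := by ext w; simp; tauto
        have e5 : ({c,b,a} : Finset (Fin n)) = {a,b,c} := by ext w; simp; tauto
        rintro (⟨rfl,rfl,rfl⟩|⟨rfl,rfl,rfl⟩|⟨rfl,rfl,rfl⟩|⟨rfl,rfl,rfl⟩|⟨rfl,rfl,rfl⟩|⟨rfl,rfl,rfl⟩) <;>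
          refine ⟨⟨?_, ?_, ?_⟩, ?_⟩ <;>
          first
            | exact hab | exact hab.symm | exact hac | exact hac.symm
            | exact hbc | exact hbc.symm | exact rfl
            | exact e1 | exact e2 | exact e3 | exact e4 | exact e5
    rw [hfib]
    rw [Finset.card_insert_of_notMem (by simp [Prod.ext_iff]; tauto),
      Finset.card_insert_of_notMem (by simp [Prod.ext_iff]; tauto),
      Finset.card_insert_of_notMem (by simp [Prod.ext_iff]; tauto),
      Finset.card_insert_of_notMem (by simp [Prod.ext_iff]; tauto),
      Finset.card_insert_of_notMem (by simp [Prod.ext_iff]; tauto),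
      Finset.card_singleton]
  rw [Finset.card_eq_sum_card_fiberwise hmap, Finset.sum_congr rfl hfibcard,
    Finset.sum_const, smul_eq_mul, mul_comm]

lemma abs_cube_eq (x : ℝ) : ((x ^ 2) : ℝ) ^ ((3:ℝ)/2) = |x| ^ 3 := by
  rw [← sq_abs, ← Real.rpow_natCast |x| 2, ← Real.rpow_mul (abs_nonneg x),
    ← Real.rpow_natCast |x| 3]
  norm_num

lemma sum_rpow_le {ι : Type*} (s : Finset ι) (f : ι → ℝ) (hf : ∀ i ∈ s, 0 ≤ f i) :
    ∑ i ∈ s, f i ^ ((3:ℝ)/2) ≤ (∑ i ∈ s, f i) ^ ((3:ℝ)/2) := by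
  set S := ∑ i ∈ s, f i with hS
  have hS0 : 0 ≤ S := Finset.sum_nonneg hf
  have h1 : ∀ i ∈ s, f i ^ ((3:ℝ)/2) ≤ f i * S ^ ((1:ℝ)/2) := by
    intro i hi
    have he : f i ^ ((3:ℝ)/2) = f i * f i ^ ((1:ℝ)/2) := by
      rw [show ((3:ℝ)/2) = 1 + 1/2 by norm_num, Real.rpow_add' (hf i hi) (by norm_num),
        Real.rpow_one]
    rw [he]
    exact mul_le_mul_of_nonneg_left
      (Real.rpow_le_rpow (hf i hi) (Finset.single_le_sum hf hi) (by norm_num)) (hf i hi)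
  calc ∑ i ∈ s, f i ^ ((3:ℝ)/2) ≤ ∑ i ∈ s, f i * S ^ ((1:ℝ)/2) := Finset.sum_le_sum h1
    _ = S * S ^ ((1:ℝ)/2) := by rw [← Finset.sum_mul]
    _ = S ^ ((3:ℝ)/2) := by
        rw [show ((3:ℝ)/2) = 1 + 1/2 by norm_num, Real.rpow_add' hS0 (by norm_num), Real.rpow_one]

lemma two_rpow_le (u v : ℝ) (hu : 0 ≤ u) (hv : 0 ≤ v) :
    u ^ ((3:ℝ)/2) + v ^ ((3:ℝ)/2) ≤ (u + v) ^ ((3:ℝ)/2) := by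
  have h1 : u ^ ((3:ℝ)/2) ≤ u * (u + v) ^ ((1:ℝ)/2) := by
    rw [show ((3:ℝ)/2) = 1 + 1/2 by norm_num, Real.rpow_add' hu (by norm_num), Real.rpow_one]
    exact mul_le_mul_of_nonneg_left
      (Real.rpow_le_rpow hu (by linarith) (by norm_num)) hu
  have h2 : v ^ ((3:ℝ)/2) ≤ v * (u + v) ^ ((1:ℝ)/2) := by
    rw [show ((3:ℝ)/2) = 1 + 1/2 by norm_num, Real.rpow_add' hv (by norm_num), Real.rpow_one]
    exact mul_le_mul_of_nonneg_left
      (Real.rpow_le_rpow hv (by linarith) (by norm_num)) hv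
  have h3 : (u + v) ^ ((3:ℝ)/2) = (u + v) * (u + v) ^ ((1:ℝ)/2) := by
    rw [show ((3:ℝ)/2) = 1 + 1/2 by norm_num, Real.rpow_add' (by linarith) (by norm_num),
      Real.rpow_one]
  rw [h3]; nlinarith [Real.rpow_nonneg (show (0:ℝ) ≤ u + v by linarith) ((1:ℝ)/2)]

/-- `λ₁(G)² ≤ m + (6 t(G))^(2/3)` for an unsigned graph `G`. -/
theorem stmt_15 {n : ℕ} (G : SimpleGraph (Fin n)) [DecidableRel G.Adj]
    (hA : (G.adjMatrix ℝ).IsHermitian)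
    (lam1 : ℝ) (hlam : IsGreatest (Set.range hA.eigenvalues) lam1) :
    lam1 ^ 2 ≤ (G.edgeFinset.card : ℝ) +
      (6 * ((G.cliqueFinset 3).card : ℝ)) ^ ((2 : ℝ) / 3) := by
  classical
  set e := hA.eigenvalues with he
  set m : ℝ := (G.edgeFinset.card : ℝ) with hm
  set t : ℝ := ((G.cliqueFinset 3).card : ℝ) with ht
  have ht0 : 0 ≤ 6 * t := by positivity
  have hsum1 : ∑ i, e i = 0 := by
    have := trace_pow_eq hA 1
    simp only [pow_one] at this
    rw [← this, SimpleGraph.trace_adjMatrix]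
  have hsum2 : ∑ i, e i ^ 2 = 2 * m := by rw [← trace_pow_eq hA 2, trace_sq]
  have hsum3 : ∑ i, e i ^ 3 = 6 * t := by
    rw [← trace_pow_eq hA 3, trace_cube, card_T]
    push_cast; ring
  obtain ⟨i₀, hi₀⟩ := hlam.1
  have hub : ∀ i, e i ≤ lam1 := fun i => hlam.2 ⟨i, rfl⟩
  -- lam1 ≥ 0
  have hpos : 0 ≤ lam1 := by
    by_contra h
    push_neg at h
    have h1 : ∑ i, e i ≤ ∑ _i : Fin n, lam1 := Finset.sum_le_sum fun i _ => hub i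
    rw [hsum1, Finset.sum_const, card_univ, Fintype.card_fin, nsmul_eq_mul] at h1
    have hn : 0 < n := Fin.pos i₀
    have hn1 : (1:ℝ) ≤ (n:ℝ) := by exact_mod_cast hn
    nlinarith
  -- lam1² ≤ 2m
  have hx2m : lam1 ^ 2 ≤ 2 * m := by
    rw [← hsum2, ← hi₀]
    exact Finset.single_le_sum (fun i _ => sq_nonneg (e i)) (Finset.mem_univ i₀)
  by_cases hcase : lam1 ^ 2 ≤ m
  · have : 0 ≤ (6 * t) ^ ((2:ℝ)/3) := Real.rpow_nonneg ht0 _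
    linarith
  push_neg at hcase
  set x := lam1 ^ 2 with hx
  -- sums over erase i₀
  have hesq : ∑ i ∈ univ.erase i₀, e i ^ 2 = 2 * m - x := by
    have := Finset.add_sum_erase univ (fun i => e i ^ 2) (Finset.mem_univ i₀)
    rw [hsum2] at this
    rw [hx, ← hi₀]; linarith
  have hesq0 : 0 ≤ 2 * m - x := by
    rw [← hesq]; exact Finset.sum_nonneg fun i _ => sq_nonneg _
  -- 6t ≥ lam1³ - (2m - x)^{3/2}
  have hcube : lam1 ^ 3 - (2 * m - x) ^ ((3:ℝ)/2) ≤ 6 * t := by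
    have h1 : ∑ i ∈ univ.erase i₀, e i ^ 3 = 6 * t - lam1 ^ 3 := by
      have := Finset.add_sum_erase univ (fun i => e i ^ 3) (Finset.mem_univ i₀)
      rw [hsum3] at this
      rw [← hi₀]; linarith
    have h2 : ∀ i ∈ univ.erase i₀, -((e i ^ 2) ^ ((3:ℝ)/2)) ≤ e i ^ 3 := by
      intro i _
      rw [abs_cube_eq]
      have : |e i ^ 3| = |e i| ^ 3 := abs_pow _ _
      nlinarith [neg_abs_le (e i ^ 3), abs_nonneg (e i)]
    have h3 : -((2 * m - x) ^ ((3:ℝ)/2)) ≤ 6 * t - lam1 ^ 3 := by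
      rw [← h1, ← hesq]
      have := sum_rpow_le (univ.erase i₀) (fun i => e i ^ 2) (fun i _ => sq_nonneg _)
      have h4 := Finset.sum_le_sum h2
      rw [Finset.sum_neg_distrib] at h4
      linarith
    linarith
  -- lam1³ = x^{3/2}
  have hl3 : lam1 ^ 3 = x ^ ((3:ℝ)/2) := by
    rw [hx, abs_cube_eq lam1, abs_of_nonneg hpos]
  -- x^{3/2} ≥ (2m-x)^{3/2} + (x-m)^{3/2}
  have hsplit : (2 * m - x) ^ ((3:ℝ)/2) + (x - m) ^ ((3:ℝ)/2) ≤ x ^ ((3:ℝ)/2) := by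
    have h5 : (x - m) ^ ((3:ℝ)/2) ≤ (2 * (x - m)) ^ ((3:ℝ)/2) :=
      Real.rpow_le_rpow (by linarith) (by linarith) (by norm_num)
    have h6 := two_rpow_le (2 * m - x) (2 * (x - m)) hesq0 (by linarith)
    have h7 : 2 * m - x + 2 * (x - m) = x := by ring
    rw [h7] at h6
    linarith
  have hkey : (x - m) ^ ((3:ℝ)/2) ≤ 6 * t := by
    rw [hl3] at hcube
    linarith
  -- conclude
  have hfin : x - m ≤ (6 * t) ^ ((2:ℝ)/3) := by
    have h8 : ((x - m) ^ ((3:ℝ)/2)) ^ ((2:ℝ)/3) ≤ (6 * t) ^ ((2:ℝ)/3) :=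
      Real.rpow_le_rpow (Real.rpow_nonneg (by linarith) _) hkey (by norm_num)
    rw [← Real.rpow_mul (by linarith : (0:ℝ) ≤ x - m)] at h8
    norm_num at h8
    linarith
  linarith
end

section
/- Let Σ = (G, σ) be a signed graph with n vertices and balanced clique number ω_b(Σ), and let λ₁(Σ) be the largest eigenvalue of A(Σ). Then λ₁(Σ) ≤ n·(1 − 1/ω_b(Σ)). -/
open Matrix Finset

private def esgn {n : ℕ} (H : SimpleGraph (Fin n)) [DecidableRel H.Adj] (i j : Fin n) : ℝ :=
  if H.Adj i j then 1 else 0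

private lemma sum_d {n : ℕ} (a b : Fin n) (E : Fin n → ℝ) :
    ∑ j, E j * ((if j = a then (1:ℝ) else 0) - (if j = b then 1 else 0)) = E a - E b := by
  simp [mul_sub, mul_ite, mul_one, mul_zero, Finset.sum_sub_distrib, Finset.sum_ite_eq']

private lemma expand_lemma {n : ℕ} (e : Fin n → Fin n → ℝ) (y d : Fin n → ℝ) (c : ℝ) :
    ∑ i, ∑ j, e i j * ((y i + c * d i) * (y j + c * d j)) =
      (∑ i, ∑ j, e i j * (y i * y j)) + c * (∑ i, ∑ j, e i j * (y i * d j))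
        + c * (∑ i, ∑ j, e i j * (d i * y j)) + c^2 * (∑ i, ∑ j, e i j * (d i * d j)) := by
  have h : ∀ i j, e i j * ((y i + c * d i) * (y j + c * d j)) =
      e i j * (y i * y j) + c * (e i j * (y i * d j)) + c * (e i j * (d i * y j))
        + c^2 * (e i j * (d i * d j)) := fun i j => by ring
  simp only [h, Finset.sum_add_distrib, Finset.mul_sum]

private lemma ms_step {n : ℕ} (H : SimpleGraph (Fin n)) [DecidableRel H.Adj]
    (y : Fin n → ℝ) (hy : ∀ i, 0 ≤ y i) {a b : Fin n} (hab : a ≠ b) (hadj : ¬ H.Adj a b)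
    (ha : y a ≠ 0) (hb : y b ≠ 0)
    (hs : (∑ i, esgn H i b * y i) ≤ (∑ i, esgn H i a * y i)) :
    ∃ y' : Fin n → ℝ, (∀ i, 0 ≤ y' i) ∧
      (univ.filter (fun i => y' i ≠ 0)) ⊆ (univ.filter (fun i => y i ≠ 0)).erase b ∧
      (∑ i, y' i) = ∑ i, y i ∧
      (∑ i, ∑ j, esgn H i j * (y i * y j)) ≤ (∑ i, ∑ j, esgn H i j * (y' i * y' j)) := by
  set d : Fin n → ℝ := fun i => (if i = a then (1:ℝ) else 0) - (if i = b then 1 else 0) with hd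
  set c : ℝ := y b with hc
  refine ⟨fun i => y i + c * d i, ?_, ?_, ?_, ?_⟩
  · intro i
    show 0 ≤ y i + c * d i
    by_cases hia : i = a
    · have hib : i ≠ b := by rw [hia]; exact hab
      have hdi : d i = 1 := by simp only [hd]; simp [hia, hib, hab]
      rw [hdi, mul_one, hc]
      have h1 := hy i; have h2 := hy b; linarith
    · by_cases hib : i = b
      · have hdi : d i = -1 := by simp only [hd]; simp [hia, hib, hab.symm]
        rw [hdi, hc, hib]; linarith
      · have hdi : d i = 0 := by simp only [hd]; simp [hia, hib]
        rw [hdi, mul_zero, add_zero]; exact hy i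
  · intro i hi
    simp only [mem_filter, mem_univ, true_and] at hi
    have hi' : y i + c * d i ≠ 0 := hi
    rw [Finset.mem_erase]
    have hdb : d b = -1 := by simp only [hd]; simp [hab.symm]
    refine ⟨fun hib => hi' ?_, ?_⟩
    · rw [hib, hdb, hc]; ring
    · simp only [mem_filter, mem_univ, true_and]
      intro hyi; apply hi'
      by_cases hia : i = a
      · exact absurd (hia ▸ hyi) ha
      · by_cases hib : i = b
        · rw [hib, hdb, hc]; ring
        · have hdi : d i = 0 := by simp only [hd]; simp [hia, hib]
          rw [hdi, hyi]; ring
  · rw [Finset.sum_add_distrib]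
    have : ∑ i, c * d i = c * ∑ i, d i := by rw [Finset.mul_sum]
    rw [this, show (∑ i, d i) = 0 by simp [hd, Finset.sum_sub_distrib, Finset.sum_ite_eq']]
    ring
  · rw [expand_lemma]
    have hsymm : ∀ i j, esgn H i j = esgn H j i := fun i j => by
      simp [esgn, SimpleGraph.adj_comm]
    have hB1 : (∑ i, ∑ j, esgn H i j * (y i * d j)) =
        (∑ i, esgn H i a * y i) - (∑ i, esgn H i b * y i) := by
      have h1 : ∀ i : Fin n, (∑ j, esgn H i j * (y i * d j)) =
          esgn H i a * y i - esgn H i b * y i := by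
        intro i
        rw [← sum_d a b (fun j => esgn H i j * y i)]
        exact Finset.sum_congr rfl fun j _ => by simp only [hd]; ring
      simp only [h1, Finset.sum_sub_distrib]
    have hB2 : (∑ i, ∑ j, esgn H i j * (d i * y j)) =
        (∑ i, esgn H i a * y i) - (∑ i, esgn H i b * y i) := by
      rw [Finset.sum_comm, ← hB1]
      exact Finset.sum_congr rfl fun j _ => Finset.sum_congr rfl fun i _ => by
        rw [hsymm j i]; ring
    have hB3 : (∑ i, ∑ j, esgn H i j * (d i * d j)) = 0 := by
      have h1 : ∀ i : Fin n, (∑ j, esgn H i j * (d i * d j)) =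
          esgn H i a * d i - esgn H i b * d i := by
        intro i
        rw [← sum_d a b (fun j => esgn H i j * d i)]
        exact Finset.sum_congr rfl fun j _ => by simp only [hd]; ring
      simp only [h1, Finset.sum_sub_distrib]
      have h2 : ∀ v : Fin n, (∑ i, esgn H i v * d i) = esgn H a v - esgn H b v := by
        intro v
        rw [show (∑ i, esgn H i v * d i) = ∑ i, (fun i => esgn H i v) i *
            ((if i = a then (1:ℝ) else 0) - (if i = b then 1 else 0)) from
          Finset.sum_congr rfl fun i _ => by simp only [hd]]
        exact sum_d a b (fun i => esgn H i v)
      rw [h2 a, h2 b]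
      have hba : ¬ H.Adj b a := fun h => hadj (H.adj_symm h)
      simp [esgn, hadj, hba]
    rw [hB1, hB2, hB3]
    have hc0 : 0 ≤ c := hc ▸ hy b
    nlinarith [mul_nonneg hc0 (sub_nonneg.mpr hs)]

private lemma ms_clique {n r : ℕ} (H : SimpleGraph (Fin n)) [DecidableRel H.Adj] (hr : 1 ≤ r)
    (hcl : ∀ S : Finset (Fin n), H.IsClique (S : Set (Fin n)) → S.card ≤ r)
    (y : Fin n → ℝ) (hy : ∀ i, 0 ≤ y i)
    (hclq : H.IsClique ((univ.filter fun i => y i ≠ 0 : Finset (Fin n)) : Set (Fin n))) :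
    ∑ i, ∑ j, esgn H i j * (y i * y j) ≤ (1 - 1/(r:ℝ)) * (∑ i, y i)^2 := by
  classical
  set S : Finset (Fin n) := univ.filter fun i => y i ≠ 0 with hS
  have hyS : ∀ i, i ∉ S → y i = 0 := by
    intro i hi; by_contra h; exact hi (by simp [hS, h])
  have hsum : (∑ i, y i) = ∑ i ∈ S, y i :=
    (Finset.sum_subset (Finset.subset_univ S) (fun i _ hi => hyS i hi)).symm
  have hF : (∑ i, ∑ j, esgn H i j * (y i * y j)) =
      ∑ i ∈ S, ∑ j ∈ S, esgn H i j * (y i * y j) := by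
    rw [← Finset.sum_subset (Finset.subset_univ S)
      (fun i _ hi => by simp [hyS i hi])]
    refine Finset.sum_congr rfl fun i _ => ?_
    rw [← Finset.sum_subset (Finset.subset_univ S)
      (fun j _ hj => by simp [hyS j hj])]
  rcases Finset.eq_empty_or_nonempty S with hSe | hSne
  · have hy0 : ∀ i, y i = 0 := fun i => hyS i (by simp [hSe])
    simp [hy0]
  · have hm1 : 1 ≤ S.card := Finset.card_pos.mpr hSne
    have hmr : S.card ≤ r := hcl S hclq
    set T : ℝ := ∑ i ∈ S, y i with hT
    set Q : ℝ := ∑ i ∈ S, (y i)^2 with hQ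
    have hQnn : 0 ≤ Q := Finset.sum_nonneg fun i _ => sq_nonneg _
    have hCS : T^2 ≤ S.card * Q := sq_sum_le_card_mul_sum_sq
    have hbound : (∑ i ∈ S, ∑ j ∈ S, esgn H i j * (y i * y j)) ≤ T^2 - Q := by
      have h1 : ∀ i ∈ S, ∀ j ∈ S, esgn H i j * (y i * y j) ≤
          (if i = j then 0 else y i * y j) := by
        intro i hi j hj
        by_cases hij : i = j
        · simp [hij, esgn]
        · simp only [hij, if_false]
          have hadj := hclq (by exact_mod_cast hi) (by exact_mod_cast hj) hij
          have : esgn H i j = 1 := by simp [esgn, hadj]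
          rw [this, one_mul]
      calc (∑ i ∈ S, ∑ j ∈ S, esgn H i j * (y i * y j))
          ≤ ∑ i ∈ S, ∑ j ∈ S, (if i = j then 0 else y i * y j) :=
            Finset.sum_le_sum fun i hi => Finset.sum_le_sum fun j hj => h1 i hi j hj
        _ = ∑ i ∈ S, ((∑ j ∈ S, y i * y j) - y i * y i) := by
            refine Finset.sum_congr rfl fun i hi => ?_
            have : ∀ j ∈ S, (if i = j then (0:ℝ) else y i * y j) =
                y i * y j - (if i = j then y i * y j else 0) := by
              intro j _; split_ifs <;> ring
            rw [Finset.sum_congr rfl this, Finset.sum_sub_distrib, Finset.sum_ite_eq S i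
              (fun j => y i * y j)]
            simp [hi]
        _ = T^2 - Q := by
            rw [Finset.sum_sub_distrib, ← Finset.sum_mul_sum]
            simp [hT, hQ, sq]
    rw [hF, hsum]
    have hr' : (0:ℝ) < r := by exact_mod_cast Nat.lt_of_lt_of_le Nat.zero_lt_one hr
    have hm' : (0:ℝ) < S.card := by exact_mod_cast hm1
    have hQT : T^2 / r ≤ Q := by
      have h2 : T^2 / (S.card : ℝ) ≤ Q := by
        rw [div_le_iff₀ hm']; calc T^2 ≤ S.card * Q := hCS
                                _ = Q * S.card := by ring
      calc T^2 / (r:ℝ) ≤ T^2 / (S.card:ℝ) :=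
            div_le_div_of_nonneg_left (sq_nonneg T) hm' (by exact_mod_cast hmr)
        _ ≤ Q := h2
    have hkey : (1 - 1/(r:ℝ)) * T^2 = T^2 - T^2 / r := by field_simp
    linarith

private lemma ms_main {n r : ℕ} (H : SimpleGraph (Fin n)) [DecidableRel H.Adj] (hr : 1 ≤ r)
    (hcl : ∀ S : Finset (Fin n), H.IsClique (S : Set (Fin n)) → S.card ≤ r) :
    ∀ (k : ℕ) (y : Fin n → ℝ), (∀ i, 0 ≤ y i) →
      (univ.filter fun i => y i ≠ 0).card ≤ k →
      ∑ i, ∑ j, esgn H i j * (y i * y j) ≤ (1 - 1/(r:ℝ)) * (∑ i, y i)^2 := by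
  intro k
  induction k with
  | zero =>
    intro y hy hcard
    have hy0 : ∀ i, y i = 0 := by
      intro i; by_contra h
      have : i ∈ univ.filter fun i => y i ≠ 0 := by simp [h]
      have := Finset.card_pos.mpr ⟨i, this⟩
      omega
    simp [hy0]
  | succ k ih =>
    intro y hy hcard
    by_cases hclq : H.IsClique ((univ.filter fun i => y i ≠ 0 : Finset (Fin n)) : Set (Fin n))
    · exact ms_clique H hr hcl y hy hclq
    · rw [SimpleGraph.isClique_iff, Set.Pairwise] at hclq
      push_neg at hclq
      obtain ⟨a, ha, b, hb, hab, hnadj⟩ := hclq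
      rw [Finset.mem_coe, Finset.mem_filter] at ha hb
      have key : ∀ a b : Fin n, a ≠ b → ¬ H.Adj a b → y a ≠ 0 → y b ≠ 0 →
          (∑ i, esgn H i b * y i) ≤ (∑ i, esgn H i a * y i) →
          ∑ i, ∑ j, esgn H i j * (y i * y j) ≤ (1 - 1/(r:ℝ)) * (∑ i, y i)^2 := by
        intro a b hab hnadj ha hb hs
        obtain ⟨y', hy', hsub, hsumeq, hle⟩ := ms_step H y hy hab hnadj ha hb hs
        have hbmem : b ∈ univ.filter fun i => y i ≠ 0 := by simp [hb]
        have hcard' : (univ.filter fun i => y' i ≠ 0).card ≤ k := by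
          have h1 := Finset.card_le_card hsub
          rw [Finset.card_erase_of_mem hbmem] at h1
          omega
        calc ∑ i, ∑ j, esgn H i j * (y i * y j)
            ≤ ∑ i, ∑ j, esgn H i j * (y' i * y' j) := hle
          _ ≤ (1 - 1/(r:ℝ)) * (∑ i, y' i)^2 := ih y' hy' hcard'
          _ = (1 - 1/(r:ℝ)) * (∑ i, y i)^2 := by rw [hsumeq]
      rcases le_total (∑ i, esgn H i b * y i) (∑ i, esgn H i a * y i) with h | h
      · exact key a b hab hnadj ha.2 hb.2 h
      · exact key b a hab.symm (fun h' => hnadj (H.adj_symm h')) hb.2 ha.2 h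

lemma aux_walkSign {V : Type*} {G : SimpleGraph V} (σ : V → V → ℝ) (η : V → ℝ)
    (hη : ∀ x, η x * η x = 1) {u v : V} (w : G.Walk u v)
    (hd : ∀ d ∈ w.darts, σ d.toProd.1 d.toProd.2 = η d.toProd.1 * η d.toProd.2) :
    walkSign σ w = η u * η v := by
  induction w with
  | nil => simp [walkSign, hη]
  | @cons u b v h p ih =>
    rw [walkSign, SimpleGraph.Walk.darts_cons, List.map_cons, List.prod_cons]
    have h1 := hd _ List.mem_cons_self
    rw [h1, show ((p.darts.map fun d => σ d.toProd.1 d.toProd.2).prod) = walkSign σ p from rfl,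
      ih (fun d hdm => hd _ (List.mem_cons_of_mem _ hdm))]
    calc η u * η b * (η b * η v) = η u * η v * (η b * η b) := by ring
      _ = η u * η v := by rw [hη, mul_one]


theorem main_aux {n : ℕ} (G : SimpleGraph (Fin n)) [DecidableRel G.Adj]
    (σ : Fin n → Fin n → ℝ)
    (hσ1 : ∀ i j, σ i j = σ j i)
    (hσ2 : ∀ i j, G.Adj i j → σ i j = 1 ∨ σ i j = -1)
    (hA : (signedAdj G σ).IsHermitian)
    (lam1 : ℝ) (hlam : IsGreatest (Set.range hA.eigenvalues) lam1)
    (ωb : ℕ)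
    (hub : ∀ S : Finset (Fin n), (G.IsClique (S : Set (Fin n)) ∧
      ∀ (u : Fin n) (w : G.Walk u u), w.IsCycle → (∀ x ∈ w.support, x ∈ S) →
        walkSign σ w = 1) → S.card ≤ ωb) :
    lam1 ≤ (n : ℝ) * (1 - 1 / ωb) := by
  classical
  obtain ⟨i, hi⟩ := hlam.1
  rcases Nat.eq_zero_or_pos n with hn | hn
  · subst hn; exact i.elim0
  -- ωb ≥ 1
  have hω1 : 1 ≤ ωb := by
    refine hub {⟨0, hn⟩} ⟨?_, ?_⟩ |>.trans_eq' (Finset.card_singleton (⟨0, hn⟩ : Fin n)).symm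
    · intro x hx y hy hxy
      rw [Finset.coe_singleton, Set.mem_singleton_iff] at hx hy
      exact absurd (hx.trans hy.symm) hxy
    · intro u w hw hsupp
      exfalso
      have h3 := hw.three_le_length
      have hne : w.darts ≠ [] := by
        intro h
        have hlen : w.darts.length = 0 := by rw [h]; rfl
        rw [SimpleGraph.Walk.length_darts] at hlen
        omega
      obtain ⟨d, hd⟩ := List.exists_mem_of_ne_nil _ hne
      have h1 := hsupp _ (SimpleGraph.Walk.dart_fst_mem_support_of_mem_darts _ hd)
      have h2 := hsupp _ (SimpleGraph.Walk.dart_snd_mem_support_of_mem_darts _ hd)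
      rw [Finset.mem_singleton] at h1 h2
      exact (d.adj.ne) (h1.trans h2.symm)
  -- eigenvector
  set v : Fin n → ℝ := fun j => hA.eigenvectorBasis i j with hv
  have hev : signedAdj G σ *ᵥ v = lam1 • v := by
    have h := hA.mulVec_eigenvectorBasis i
    rw [hi] at h
    exact h
  have hvne : ∃ j, v j ≠ 0 := by
    by_contra h
    push_neg at h
    exact hA.eigenvectorBasis.orthonormal.ne_zero i (by ext j; exact h j)
  set Q : ℝ := ∑ j, v j ^ 2 with hQ
  have hQpos : 0 < Q := by
    obtain ⟨j, hj⟩ := hvne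
    exact Finset.sum_pos' (fun k _ => sq_nonneg _) ⟨j, Finset.mem_univ j, by positivity⟩
  -- positive-part graph
  set H : SimpleGraph (Fin n) :=
    { Adj := fun a b => G.Adj a b ∧ 0 < σ a b * (v a * v b)
      symm := by
        constructor
        intro a b ⟨h1, h2⟩
        refine ⟨h1.symm, ?_⟩
        rw [hσ1 b a, mul_comm (v b) (v a)]
        exact h2
      loopless := ⟨fun a h => G.irrefl h.1⟩ } with hH
  letI : DecidableRel H.Adj := Classical.decRel _
  -- cliques of H are balanced cliques of G
  have hcl : ∀ S : Finset (Fin n), H.IsClique (S : Set (Fin n)) → S.card ≤ ωb := by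
    intro S hS
    refine hub S ⟨fun x hx y hy hxy => (hS hx hy hxy).1, ?_⟩
    intro u w hw hsupp
    set η : Fin n → ℝ := fun x => if v x < 0 then -1 else 1 with hη
    have hη2 : ∀ x, η x * η x = 1 := by
      intro x; by_cases h : v x < 0 <;> simp [hη, h]
    rw [aux_walkSign σ η hη2 w ?_]
    · exact hη2 u
    intro d hd
    have h1 := hsupp _ (SimpleGraph.Walk.dart_fst_mem_support_of_mem_darts _ hd)
    have h2 := hsupp _ (SimpleGraph.Walk.dart_snd_mem_support_of_mem_darts _ hd)
    have hne : d.toProd.1 ≠ d.toProd.2 := d.adj.ne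
    have hAdj : H.Adj d.toProd.1 d.toProd.2 :=
      hS (Finset.mem_coe.mpr h1) (Finset.mem_coe.mpr h2) hne
    obtain ⟨hG, hpos⟩ := hAdj
    set a := d.toProd.1; set b := d.toProd.2
    rcases hσ2 _ _ hG with hs | hs
    · rw [hs]
      have hvv : 0 < v a * v b := by rw [hs] at hpos; linarith
      by_cases s1 : v a < 0
      · have s2 : v b < 0 := by nlinarith
        simp [hη, s1, s2]
      · have s2 : ¬ v b < 0 := by
          intro h; push_neg at s1; nlinarith
        simp [hη, s1, s2]
    · rw [hs]
      have hvv : v a * v b < 0 := by rw [hs] at hpos; linarith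
      by_cases s1 : v a < 0
      · have s2 : ¬ v b < 0 := by intro h; nlinarith
        simp [hη, s1, s2]
      · have s2 : v b < 0 := by
          by_contra h; push_neg at s1 h; nlinarith
        simp [hη, s1, s2]
  -- Rayleigh bound
  have hray : lam1 * Q ≤ ∑ a, ∑ b, esgn H a b * (|v a| * |v b|) := by
    have h1 : lam1 * Q = ∑ a, ∑ b, v a * (signedAdj G σ a b * v b) := by
      have h2 : ∀ a, (∑ b, signedAdj G σ a b * v b) = lam1 * v a := fun a => congrFun hev a
      calc lam1 * Q = ∑ a, v a * (lam1 * v a) := by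
            rw [hQ, Finset.mul_sum]; exact Finset.sum_congr rfl fun a _ => by ring
        _ = ∑ a, v a * (∑ b, signedAdj G σ a b * v b) := by
            exact Finset.sum_congr rfl fun a _ => by rw [h2]
        _ = _ := Finset.sum_congr rfl fun a _ => by rw [Finset.mul_sum]
    rw [h1]
    refine Finset.sum_le_sum fun a _ => Finset.sum_le_sum fun b _ => ?_
    by_cases hGa : G.Adj a b
    · by_cases hp : 0 < σ a b * (v a * v b)
      · have hadj : H.Adj a b := ⟨hGa, hp⟩
        have he1 : esgn H a b = 1 := by unfold esgn; rw [if_pos hadj]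
        have habs : |σ a b| = 1 := by rcases hσ2 _ _ hGa with h | h <;> simp [h]
        have : v a * (signedAdj G σ a b * v b) = σ a b * (v a * v b) := by
          simp [signedAdj, hGa]; ring
        rw [this, he1, one_mul, show σ a b * (v a * v b) = |σ a b * (v a * v b)| from
          (abs_of_pos hp).symm, abs_mul, habs, one_mul, abs_mul]
      · have hadj : ¬ H.Adj a b := fun h => hp h.2
        have he1 : esgn H a b = 0 := by unfold esgn; rw [if_neg hadj]
        rw [he1, zero_mul]
        have : v a * (signedAdj G σ a b * v b) = σ a b * (v a * v b) := by
          simp [signedAdj, hGa]; ring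
        rw [this]; exact not_lt.mp hp
    · have hadj : ¬ H.Adj a b := fun h => hGa h.1
      have he1 : esgn H a b = 0 := by unfold esgn; rw [if_neg hadj]
      rw [he1, zero_mul]
      simp [signedAdj, hGa]
  -- Motzkin–Straus
  have hms := ms_main H hω1 hcl n (fun j => |v j|) (fun j => abs_nonneg _)
    (le_trans (Finset.card_filter_le _ _) (by simp))
  have hcs : (∑ j, |v j|)^2 ≤ (n : ℝ) * Q := by
    have := sq_sum_le_card_mul_sum_sq (s := (univ : Finset (Fin n))) (f := fun j => |v j|)
    simp only [Finset.card_univ, Fintype.card_fin, sq_abs] at this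
    exact_mod_cast this
  have hc0 : (0:ℝ) ≤ 1 - 1/(ωb:ℝ) := by
    have : (1:ℝ) ≤ (ωb:ℝ) := by exact_mod_cast hω1
    have h2 : 1/(ωb:ℝ) ≤ 1 := by
      rw [div_le_one (by linarith)]; linarith
    linarith
  have hchain : lam1 * Q ≤ ((n:ℝ) * (1 - 1/(ωb:ℝ))) * Q := by
    calc lam1 * Q ≤ ∑ a, ∑ b, esgn H a b * (|v a| * |v b|) := hray
      _ ≤ (1 - 1/(ωb:ℝ)) * (∑ j, |v j|)^2 := hms
      _ ≤ (1 - 1/(ωb:ℝ)) * ((n:ℝ) * Q) := by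
          exact mul_le_mul_of_nonneg_left hcs hc0
      _ = ((n:ℝ) * (1 - 1/(ωb:ℝ))) * Q := by ring
  exact le_of_mul_le_mul_right hchain hQpos

/-- `λ₁(Σ) ≤ n(1 - 1/ω_b(Σ))`. -/
theorem stmt_17 {n : ℕ} (G : SimpleGraph (Fin n)) [DecidableRel G.Adj]
    (σ : Fin n → Fin n → ℝ) (hσ : IsSignFn G σ)
    (hA : (signedAdj G σ).IsHermitian)
    (lam1 : ℝ) (hlam : IsGreatest (Set.range hA.eigenvalues) lam1)
    (ωb : ℕ) (hω : IsGreatest (BalancedCliqueSet G σ) ωb) :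
    lam1 ≤ (n : ℝ) * (1 - 1 / ωb) := by
  obtain ⟨hσ1, hσ2⟩ := hσ
  exact main_aux G σ hσ1 hσ2 hA lam1 hlam ωb (fun S hS => hω.2 ⟨S, hS, rfl⟩)
end

section
/- Let Σ = (G, σ) be a signed graph with adjacency matrix A(Σ), spectral radius ρ(Σ), and signed walk counts w_k(Σ) = eᵀA(Σ)^{k−1}e. Then for every integer r > 0 and every odd integer q > 0, w_{q+r}(Σ) ≤ ρ(Σ)^r · w_q(Σ); in particular, if w_q(Σ) > 0 then w_{q+r}(Σ)/w_q(Σ) ≤ ρ(Σ)^r. -/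
open Matrix Finset

/-- The signed walk count `w_k(Σ) = eᵀ A(Σ)^(k-1) e`. -/
noncomputable def signedWalkSum {n : ℕ} (G : SimpleGraph (Fin n)) [DecidableRel G.Adj]
    (σ : Fin n → Fin n → ℝ) (k : ℕ) : ℝ :=
  (fun _ => (1 : ℝ)) ⬝ᵥ ((signedAdj G σ) ^ (k - 1)) *ᵥ (fun _ => (1 : ℝ))

/-- For `r > 0` and odd `q > 0`, `w_{q+r}(Σ) ≤ ρ(Σ)^r · w_q(Σ)`;
in particular, if `w_q(Σ) > 0` then `w_{q+r}(Σ)/w_q(Σ) ≤ ρ(Σ)^r`. -/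
theorem stmt_19 {n : ℕ} (G : SimpleGraph (Fin n)) [DecidableRel G.Adj]
    (σ : Fin n → Fin n → ℝ) (hσ : IsSignFn G σ)
    (hA : (signedAdj G σ).IsHermitian)
    (ρ : ℝ) (hρ : IsGreatest (Set.range fun i => |hA.eigenvalues i|) ρ)
    (r q : ℕ) (hr : 0 < r) (hq : 0 < q) (hqodd : Odd q) :
    signedWalkSum G σ (q + r) ≤ ρ ^ r * signedWalkSum G σ q ∧
    (0 < signedWalkSum G σ q →
      signedWalkSum G σ (q + r) / signedWalkSum G σ q ≤ ρ ^ r) := by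
    classical
  set A := signedAdj G σ with hAdef
  set U : Matrix (Fin n) (Fin n) ℝ := (hA.eigenvectorUnitary : Matrix (Fin n) (Fin n) ℝ) with hUdef
  have hUmem := (hA.eigenvectorUnitary).2
  have hU1 : U * star U = 1 := (Matrix.mem_unitaryGroup_iff).mp hUmem
  have hU2 : star U * U = 1 := (Matrix.mem_unitaryGroup_iff').mp hUmem
  set lam := hA.eigenvalues with hlam
  have hspec : A = U * Matrix.diagonal lam * star U := by
    simpa [hUdef, hlam] using hA.spectral_theorem
  set c : Fin n → ℝ := star U *ᵥ (fun _ => 1) with hc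
  have hpow : ∀ m, A ^ m = U * Matrix.diagonal (fun i => lam i ^ m) * star U := by
    intro m
    induction m with
    | zero => simp [Matrix.diagonal_one, hU1]
    | succ m ih =>
      rw [pow_succ, ih, hspec]
      rw [Matrix.mul_assoc, Matrix.mul_assoc, ← Matrix.mul_assoc (star U),
        ← Matrix.mul_assoc (star U), hU2, Matrix.one_mul,
        ← Matrix.mul_assoc, ← Matrix.mul_assoc, Matrix.mul_assoc U,
        Matrix.diagonal_mul_diagonal]
      simp [pow_succ]
  have hsum : ∀ m, (fun _ => (1:ℝ)) ⬝ᵥ (A ^ m) *ᵥ (fun _ => 1) = ∑ i, (c i)^2 * lam i ^ m := by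
    intro m
    rw [hpow m, ← Matrix.mulVec_mulVec, ← Matrix.mulVec_mulVec, dotProduct_mulVec]
    have h1 : (fun _ => (1:ℝ)) ᵥ* U = c := by
      ext j
      simp [Matrix.vecMul, Matrix.mulVec, dotProduct, Matrix.star_apply, hc]
    rw [h1]
    simp only [Matrix.mulVec_diagonal, dotProduct]
    exact Finset.sum_congr rfl fun i _ => by ring
  have e1 : signedWalkSum G σ (q + r) = ∑ i, (c i)^2 * lam i ^ (q + r - 1) := hsum (q + r - 1)
  have e2 : signedWalkSum G σ q = ∑ i, (c i)^2 * lam i ^ (q - 1) := hsum (q - 1)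
  have key : signedWalkSum G σ (q + r) ≤ ρ ^ r * signedWalkSum G σ q := by
    rw [e1, e2, Finset.mul_sum]
    apply Finset.sum_le_sum
    intro i _
    have hev : Even (q - 1) := Nat.Odd.sub_odd hqodd odd_one
    have hnn : (0:ℝ) ≤ (c i)^2 * lam i ^ (q - 1) :=
      mul_nonneg (sq_nonneg _) (hev.pow_nonneg _)
    have hlr : lam i ^ r ≤ ρ ^ r := by
      calc lam i ^ r ≤ |lam i ^ r| := le_abs_self _
        _ = |lam i| ^ r := abs_pow _ _
        _ ≤ ρ ^ r := pow_le_pow_left₀ (abs_nonneg _) (hρ.2 ⟨i, rfl⟩) r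
    have hsplit : q + r - 1 = (q - 1) + r := by omega
    rw [hsplit, pow_add, ← mul_assoc]
    calc (c i)^2 * lam i ^ (q-1) * lam i ^ r ≤ (c i)^2 * lam i ^ (q-1) * ρ ^ r :=
          mul_le_mul_of_nonneg_left hlr hnn
      _ = ρ ^ r * ((c i)^2 * lam i ^ (q-1)) := by ring
  exact ⟨key, fun h => (div_le_iff₀ h).mpr key⟩
end
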